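/- arXiv:1605.00372 — 6 statements merged into one kernel-verified Lean document; each statement's English description precedes it below -/
import Mathlib

section
/- Let H be a connected finite simple block graph and let B be a block of H with vertex set V(B) = {u_1, u_2, …, u_k}. For each 1 ≤ i ≤ k, let G_i denote the connected component containing u_i of the subgraph of H induced by (V(H) ∖ V(B)) ∪ {u_i}, and for S ⊆ V(H) write S_i = S ∩ V(G_i). Let S ⊆ V(H) be such that the induced subgraph H[S ∖ {u_1}] has a perfect matching. Then for each 2 ≤ i ≤ k, either G_i[S_i] has a perfect matching, or u_i ∈ S_i and G_i[S_i ∖ {u_i}] has a perfect matching. Moreover, if S is in addition a dominating set of H, then for each 2 ≤ i ≤ k the set S_i dominates every vertex of V(G_i) ∖ ({u_i} ∪ S_i). -/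
open SimpleGraph

variable {V : Type*}

/-- `S` is a dominating set of `G`. -/
def Dominating (G : SimpleGraph V) (S : Set V) : Prop :=
  ∀ v ∉ S, ∃ u ∈ S, G.Adj v u

/-- Within the subgraph of `G` induced by `A` (for `S ⊆ A`), the set `S` dominates
every vertex of `A \ S`. -/
def DominatingOn (G : SimpleGraph V) (A S : Set V) : Prop :=
  ∀ v ∈ A, v ∉ S → ∃ w ∈ S, G.Adj v w

/-- The induced subgraph `G[S]` has a perfect matching, i.e. there is a matching of `G`
whose vertex set is exactly `S`. -/
def HasPerfectMatchingOn (G : SimpleGraph V) (S : Set V) : Prop :=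
  ∃ M : G.Subgraph, M.verts = S ∧ M.IsMatching

/-- `S` is a paired-dominating set of `G`. -/
def PairedDominating (G : SimpleGraph V) (S : Set V) : Prop :=
  Dominating G S ∧ HasPerfectMatchingOn G S

/-- `v` is a cut vertex: deleting it disconnects the graph. -/
def IsCutVertex (G : SimpleGraph V) (v : V) : Prop :=
  ¬ (G.induce ({v}ᶜ : Set V)).Preconnected

/-- The graph has no cut vertex. -/
def HasNoCutVertex (G : SimpleGraph V) : Prop :=
  ∀ v : V, ¬ IsCutVertex G v

/-- `B` is a block of `G`: a maximal vertex set inducing a connected subgraph with no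
cut vertex. -/
def IsBlock (G : SimpleGraph V) (B : Set V) : Prop :=
  (G.induce B).Connected ∧ HasNoCutVertex (G.induce B) ∧
    ∀ B' : Set V, B ⊆ B' → (G.induce B').Connected → HasNoCutVertex (G.induce B') → B' = B

/-- `G` is a block graph: every block is a complete subgraph. -/
def IsBlockGraph (G : SimpleGraph V) : Prop :=
  ∀ B : Set V, IsBlock G B → B.Pairwise G.Adj

/-- The vertex set of the connected component containing `u` of the subgraph of `G`
induced by `A`. -/
def componentOf (G : SimpleGraph V) (A : Set V) (u : V) : Set V :=
  {v | ∃ (hu : u ∈ A) (hv : v ∈ A), (G.induce A).Reachable ⟨u, hu⟩ ⟨v, hv⟩}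


section Aux

open Walk

lemma reachable_induce_of_walk' {H : SimpleGraph V} {C : Set V} :
    ∀ {a b : V} (p : H.Walk a b), (∀ x ∈ p.support, x ∈ C) →
      ∀ (ha : a ∈ C) (hb : b ∈ C), (H.induce C).Reachable ⟨a, ha⟩ ⟨b, hb⟩ := by
  intro a b p
  induction p with
  | nil => exact fun _ ha hb => Reachable.refl _
  | @cons a c b h p ih =>
    intro hs ha hb
    have hc : c ∈ C := hs c (by simp)
    have hadj : (H.induce C).Adj ⟨a, ha⟩ ⟨c, hc⟩ := h
    exact hadj.reachable.trans (ih (fun x hx => hs x (by simp [hx])) hc hb)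

lemma reachable_of_induce_reachable' {H : SimpleGraph V} {A : Set V} {a b : V}
    {ha : a ∈ A} {hb : b ∈ A} (hr : (H.induce A).Reachable ⟨a, ha⟩ ⟨b, hb⟩) :
    ∃ p : H.Walk a b, p.IsPath ∧ ∀ x ∈ p.support, x ∈ A := by
  classical
  obtain ⟨p0⟩ := hr
  let f := SimpleGraph.Embedding.induce A (G := H)
  refine ⟨((p0.map f.toHom).toPath.1 : H.Walk a b), (p0.map f.toHom).toPath.2, fun x hx => ?_⟩
  have := (p0.map f.toHom).support_toPath_subset hx
  rw [Walk.support_map] at this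
  obtain ⟨y, _, rfl⟩ := List.mem_map.mp this
  exact y.2

lemma key_closed {H : SimpleGraph V} (hbg : IsBlockGraph H) {B : Set V} (hB : IsBlock H B)
    {a : V} (ha : a ∈ B) {v w : V} (hv : v ∈ componentOf H (Bᶜ ∪ {a}) a) (hvne : v ≠ a)
    (hadj : H.Adj v w) : w ∈ componentOf H (Bᶜ ∪ {a}) a := by
  classical
  set A : Set V := Bᶜ ∪ {a} with hA
  obtain ⟨haA, hvA, hr⟩ := hv
  by_cases hwB : w ∈ B
  · by_cases hwa : w = a
    · subst hwa; exact ⟨haA, haA, Reachable.refl _⟩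
    · exfalso
      have hvBc : v ∈ Bᶜ := hvA.resolve_right hvne
      obtain ⟨q, hq, hqs⟩ := reachable_of_induce_reachable' hr
      have hwq : w ∉ q.support := fun hx => (hqs w hx).elim (fun h => h hwB) hwa
      set c : H.Walk a w := q.concat hadj with hc
      have hcp : c.IsPath := by
        rw [← Walk.isPath_reverse_iff, hc, Walk.reverse_concat]
        exact (Walk.cons_isPath_iff _ _).2 ⟨(Walk.isPath_reverse_iff q).2 hq,
          by rwa [Walk.support_reverse, List.mem_reverse]⟩
      set B' : Set V := B ∪ {x | x ∈ c.support} with hB'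
      have hBB' : B ⊆ B' := Set.subset_union_left
      have hcB' : ∀ x ∈ c.support, x ∈ B' := fun x hx => Or.inr hx
      have hpw : B.Pairwise H.Adj := hbg B hB
      have hconn : (H.induce B').Connected := by
        rw [connected_iff]
        refine ⟨?_, ⟨⟨a, hBB' ha⟩⟩⟩
        have base : ∀ (y : V) (hy : y ∈ B'), (H.induce B').Reachable ⟨y, hy⟩ ⟨a, hBB' ha⟩ := by
          intro y hy
          rcases hy with hyB | hyc
          · by_cases hya : y = a
            · subst hya; exact Reachable.refl _
            · exact Adj.reachable (by exact hpw hyB ha hya)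
          · have hds : ∀ x ∈ (c.takeUntil y hyc).support, x ∈ B' :=
              fun x hx => hcB' x (Walk.support_takeUntil_subset _ _ hx)
            exact (reachable_induce_of_walk' (c.takeUntil y hyc) hds (hBB' ha) (Or.inr hyc)).symm
        intro x y
        exact (base x.1 x.2).trans (base y.1 y.2).symm
      have hncv : HasNoCutVertex (H.induce B') := by
        intro xh hcut
        apply hcut
        set x : V := xh.1 with hxdef
        set D : Set V := B' \ {x} with hD
        obtain ⟨z, hzB, hzx⟩ : ∃ z, z ∈ B ∧ z ≠ x := by
          by_cases hxa : x = a
          · exact ⟨w, hwB, fun h => hwa (h.trans hxa)⟩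
          · exact ⟨a, ha, fun h => hxa h.symm⟩
        have hzD : z ∈ D := ⟨hBB' hzB, hzx⟩
        have hBreach : ∀ (y : V) (hyB : y ∈ B) (hyx : y ≠ x),
            (H.induce D).Reachable ⟨y, ⟨hBB' hyB, hyx⟩⟩ ⟨z, hzD⟩ := by
          intro y hyB hyx
          by_cases hyz : y = z
          · subst hyz; exact Reachable.refl _
          · exact Adj.reachable (by exact hpw hyB hzB hyz)
        have hDreach : ∀ (y : V) (hy : y ∈ D), (H.induce D).Reachable ⟨y, hy⟩ ⟨z, hzD⟩ := by
          intro y hy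
          obtain ⟨hyB', hyx⟩ := hy
          have hyx' : y ≠ x := hyx
          rcases hyB' with hyB | hyc
          · exact hBreach y hyB hyx'
          · by_cases hxd : x ∈ (c.takeUntil y hyc).support
            · have hxe : x ∉ (c.dropUntil y hyc).support := by
                intro hxe
                have hnd := hcp.support_nodup
                rw [← Walk.take_spec c hyc, Walk.support_append] at hnd
                have hxe' : x ∈ (c.dropUntil y hyc).support.tail := by
                  rw [Walk.support_eq_cons (c.dropUntil y hyc)] at hxe
                  rcases List.mem_cons.mp hxe with h | h
                  · exact absurd h.symm hyx'
                  · exact h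
                exact (List.disjoint_of_nodup_append hnd) hxd hxe'
              have hes : ∀ t ∈ (c.dropUntil y hyc).support, t ∈ D := by
                intro t ht
                exact ⟨hcB' t (Walk.support_dropUntil_subset _ _ ht), fun h => hxe (h ▸ ht)⟩
              have hwx : w ≠ x := fun h => hxe (h ▸ (c.dropUntil y hyc).end_mem_support)
              exact (reachable_induce_of_walk' (c.dropUntil y hyc) hes
                ⟨Or.inr hyc, hyx'⟩ ⟨hBB' hwB, hwx⟩).trans (hBreach w hwB hwx)
            · have hds : ∀ t ∈ (c.takeUntil y hyc).support, t ∈ D := by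
                intro t ht
                exact ⟨hcB' t (Walk.support_takeUntil_subset _ _ ht), fun h => hxd (h ▸ ht)⟩
              have hax : a ≠ x := fun h => hxd (h ▸ (c.takeUntil y hyc).start_mem_support)
              exact ((reachable_induce_of_walk' (c.takeUntil y hyc) hds
                ⟨hBB' ha, hax⟩ ⟨Or.inr hyc, hyx'⟩).symm).trans (hBreach a ha hax)
        have hpre : (H.induce D).Preconnected := fun p q =>
          (hDreach p.1 p.2).trans (hDreach q.1 q.2).symm
        let f : H.induce D →g (H.induce B').induce ({xh}ᶜ : Set ↥B') :=
          { toFun := fun y => ⟨⟨y.1, y.2.1⟩, fun h => y.2.2 (congrArg Subtype.val h)⟩,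
            map_rel' := fun h => h }
        have hsurj : Function.Surjective f := by
          rintro ⟨⟨y, hyB'⟩, hy⟩
          exact ⟨⟨y, hyB', fun h => hy (Subtype.ext h)⟩, rfl⟩
        exact hpre.map f hsurj
      have hBeq : B' = B := hB.2.2 B' hBB' hconn hncv
      have hvB' : v ∈ B' := hcB' v (by
        rw [hc, Walk.support_concat, List.mem_append]
        exact Or.inl q.end_mem_support)
      rw [hBeq] at hvB'
      exact hvBc hvB'
  · have hwA : w ∈ A := Or.inl hwB
    have hadj' : (H.induce A).Adj ⟨v, hvA⟩ ⟨w, hwA⟩ := hadj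
    exact ⟨haA, hwA, hr.trans hadj'.reachable⟩

lemma matching_restrict {H : SimpleGraph V} {M : H.Subgraph} (hM : M.IsMatching) {T : Set V}
    (hT : T ⊆ M.verts) (hcl : ∀ v ∈ T, ∀ w, M.Adj v w → w ∈ T) :
    HasPerfectMatchingOn H T := by
  refine ⟨M.induce T, rfl, ?_⟩
  intro v hv
  obtain ⟨w, hw, hwu⟩ := hM (hT hv)
  exact ⟨w, ⟨hv, hcl v hv w hw, hw⟩, fun y hy => hwu y hy.2.2⟩

end Aux

theorem stmt_8 {V : Type*} [Fintype V] (H : SimpleGraph V) (hH : H.Connected)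
    (hbg : IsBlockGraph H) (B : Set V) (hB : IsBlock H B)
    (k : ℕ) (hk : 0 < k) (u : Fin k → V) (huinj : Function.Injective u)
    (hurange : Set.range u = B)
    (G' : Fin k → Set V) (hG' : ∀ i : Fin k, G' i = componentOf H (Bᶜ ∪ {u i}) (u i))
    (S : Set V) (hpm : HasPerfectMatchingOn H (S \ {u ⟨0, hk⟩})) :
    (∀ i : Fin k, i ≠ ⟨0, hk⟩ →
      HasPerfectMatchingOn H (S ∩ G' i) ∨
        (u i ∈ S ∩ G' i ∧ HasPerfectMatchingOn H ((S ∩ G' i) \ {u i}))) ∧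
    (Dominating H S → ∀ i : Fin k, i ≠ ⟨0, hk⟩ →
      ∀ v ∈ G' i, v ∉ S ∩ G' i → v ≠ u i → ∃ w ∈ S ∩ G' i, H.Adj v w) := by
  classical
  obtain ⟨M, hMv, hMm⟩ := hpm
  -- basic facts per index
  have main : ∀ i : Fin k, i ≠ ⟨0, hk⟩ →
      (u i ∈ G' i) ∧ (u ⟨0, hk⟩ ∉ G' i) ∧
      (∀ v ∈ G' i, v ≠ u i → ∀ w, H.Adj v w → w ∈ G' i) ∧
      (S ∩ G' i ⊆ M.verts) := by
    intro i hi
    have ha : u i ∈ B := hurange ▸ Set.mem_range_self i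
    have hau0 : u i ≠ u ⟨0, hk⟩ := fun h => hi (huinj h)
    have haA : u i ∈ Bᶜ ∪ {u i} := Or.inr rfl
    have haGi : u i ∈ G' i := by
      rw [hG' i]; exact ⟨haA, haA, Reachable.refl _⟩
    have hGiA : ∀ v ∈ G' i, v ∈ Bᶜ ∪ {u i} := by
      intro v hv; rw [hG' i] at hv; exact hv.2.1
    have hu0B : u ⟨0, hk⟩ ∈ B := hurange ▸ Set.mem_range_self _
    have hu0Gi : u ⟨0, hk⟩ ∉ G' i := by
      intro h
      rcases hGiA _ h with h' | h'
      · exact h' hu0B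
      · exact hau0 h'.symm
    refine ⟨haGi, hu0Gi, ?_, ?_⟩
    · intro v hv hvne w hw
      rw [hG' i] at hv ⊢
      exact key_closed hbg hB ha hv hvne hw
    · intro v hv
      rw [hMv]
      exact ⟨hv.1, fun h => hu0Gi ((h : v = _) ▸ hv.2)⟩
  constructor
  · intro i hi
    obtain ⟨haGi, hu0Gi, hclosed, hsub⟩ := main i hi
    by_cases haS : u i ∈ S
    · have haM : u i ∈ M.verts := hsub ⟨haS, haGi⟩
      obtain ⟨b, hab, hbu⟩ := hMm haM
      by_cases hbGi : b ∈ G' i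
      · left
        refine matching_restrict hMm hsub ?_
        intro v hv w hw
        have hwS : w ∈ S := (hMv ▸ M.edge_vert hw.symm).1
        by_cases hva : v = u i
        · subst hva
          have : w = b := hbu w hw
          exact ⟨hwS, this ▸ hbGi⟩
        · exact ⟨hwS, hclosed v hv.2 hva w (M.adj_sub hw)⟩
      · right
        refine ⟨⟨haS, haGi⟩, ?_⟩
        refine matching_restrict hMm (fun v hv => hsub hv.1) ?_
        intro v hv w hw
        have hwS : w ∈ S := (hMv ▸ M.edge_vert hw.symm).1
        have hva : v ≠ u i := hv.2
        have hwGi : w ∈ G' i := hclosed v hv.1.2 hva w (M.adj_sub hw)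
        refine ⟨⟨hwS, hwGi⟩, ?_⟩
        intro hwa
        have : v = b := hbu v (hwa ▸ hw).symm
        exact hbGi (this ▸ hv.1.2)
    · left
      refine matching_restrict hMm hsub ?_
      intro v hv w hw
      have hwS : w ∈ S := (hMv ▸ M.edge_vert hw.symm).1
      have hva : v ≠ u i := fun h => haS (h ▸ hv.1)
      exact ⟨hwS, hclosed v hv.2 hva w (M.adj_sub hw)⟩
  · intro hdom i hi v hvGi hvS hva
    obtain ⟨haGi, hu0Gi, hclosed, hsub⟩ := main i hi
    have hvnS : v ∉ S := fun h => hvS ⟨h, hvGi⟩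
    obtain ⟨w, hwS, hadj⟩ := hdom v hvnS
    exact ⟨w, ⟨hwS, hclosed v hvGi hva w hadj⟩, hadj⟩
end

section
/- Let H be a connected finite simple block graph and let B be a block of H with vertex set V(B) = {u_1, u_2, …, u_k}. For each 1 ≤ i ≤ k, let G_i denote the connected component containing u_i of the subgraph of H induced by (V(H) ∖ V(B)) ∪ {u_i}, and for S ⊆ V(H) write S_i = S ∩ V(G_i). If S is a paired-dominating set of H with u_1 ∉ S, then u_1 ∉ S_1, the induced subgraph G_1[S_1] has a perfect matching, and S_1 dominates every vertex of V(G_1) ∖ ({u_1} ∪ S_1); consequently, either S_1 is a paired-dominating set of G_1 not containing u_1, or S_1 is a paired-dominating set of the graph G_1 − u_1 such that no vertex of S_1 is adjacent to u_1. -/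
open SimpleGraph

variable {V : Type*}

private lemma walk_lift {W : Type*} {K : SimpleGraph W} {C : Set W} :
    ∀ {x y : W} (p : K.Walk x y), (∀ z ∈ p.support, z ∈ C) → ∀ (hx : x ∈ C) (hy : y ∈ C),
    ∃ q : (K.induce C).Walk ⟨x, hx⟩ ⟨y, hy⟩, ∀ z ∈ q.support, (z : W) ∈ p.support := by
  intro x y p
  induction p with
  | nil =>
    intro _ hx hy
    exact ⟨SimpleGraph.Walk.nil, by simp⟩
  | @cons x b y h p ih =>
    intro hp hx hy
    have hb : b ∈ C := hp b (by simp [SimpleGraph.Walk.support_cons])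
    obtain ⟨q, hq⟩ := ih (fun z hz => hp z (by simp [SimpleGraph.Walk.support_cons, hz])) hb hy
    refine ⟨SimpleGraph.Walk.cons (by exact h) q, ?_⟩
    intro z hz
    change z ∈ (⟨x, hx⟩ :: q.support) at hz
    rw [List.mem_cons] at hz
    rcases hz with rfl | hz
    · simp [SimpleGraph.Walk.support_cons]
    · simp only [SimpleGraph.Walk.support_cons, List.mem_cons]
      exact Or.inr (hq z hz)

private lemma reach_lift {W : Type*} {K : SimpleGraph W} {C : Set W} {x y : W} (p : K.Walk x y)
    (hp : ∀ z ∈ p.support, z ∈ C) (hx : x ∈ C) (hy : y ∈ C) :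
    (K.induce C).Reachable ⟨x, hx⟩ ⟨y, hy⟩ :=
  (walk_lift p hp hx hy).elim fun q _ => ⟨q⟩

/-- Key block-graph lemma: a vertex of the component of `u₁` (other than `u₁`) cannot be
adjacent to a vertex of `B` other than `u₁`. -/
private lemma lemA {V : Type*} {H : SimpleGraph V} {B : Set V} (hB : IsBlock H B)
    (hpw : B.Pairwise H.Adj) {u₁ : V} (hu₁B : u₁ ∈ B) {w : V}
    (hw : w ∈ componentOf H (Bᶜ ∪ {u₁}) u₁) (hwne : w ≠ u₁)
    {x : V} (hxB : x ∈ B) (hxne : x ≠ u₁) (hadj : H.Adj w x) : False := by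
  classical
  set A : Set V := Bᶜ ∪ {u₁} with hA
  obtain ⟨hu, hwA, hreach⟩ := hw
  obtain ⟨p0⟩ := hreach
  let hom : H.induce A →g H := ⟨Subtype.val, fun {a b} h => h⟩
  let q : H.Walk u₁ w := p0.map hom
  have hqA : ∀ z ∈ q.support, z ∈ A := by
    intro z hz
    rw [SimpleGraph.Walk.support_map, List.mem_map] at hz
    obtain ⟨⟨z', hz'⟩, _, rfl⟩ := hz
    exact hz'
  set π : H.Walk u₁ w := q.bypass with hπdef
  have hπp : π.IsPath := q.bypass_isPath
  have hπA : ∀ z ∈ π.support, z ∈ A := fun z hz => hqA z (q.support_bypass_subset hz)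
  have hPB : ∀ z ∈ π.support, z ∈ B → z = u₁ := by
    intro z hz hzB
    rcases hπA z hz with h | h
    · exact absurd hzB h
    · exact h
  set B' : Set V := B ∪ {z | z ∈ π.support} with hB'
  have hBsub : B ⊆ B' := Set.subset_union_left
  have hPsub : ∀ z ∈ π.support, z ∈ B' := fun z hz => Or.inr hz
  have hwB : w ∉ B := by
    intro hwB
    exact hwne (hPB w π.end_mem_support hwB)
  have hu₁B' : u₁ ∈ B' := hBsub hu₁B
  -- connectivity of B'
  have hconn : (H.induce B').Connected := by
    have hne : Nonempty ↥B' := ⟨⟨u₁, hu₁B'⟩⟩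
    refine Connected.mk ?_
    have hhub : ∀ a : ↥B', (H.induce B').Reachable a ⟨u₁, hu₁B'⟩ := by
      rintro ⟨a, haB | haP⟩
      · by_cases hau : a = u₁
        · subst hau; exact Reachable.refl _
        · exact Adj.reachable (by exact hpw haB hu₁B hau)
      · refine reach_lift (π.takeUntil a haP).reverse ?_ (hPsub a haP) hu₁B'
        intro z hz
        rw [SimpleGraph.Walk.support_reverse, List.mem_reverse] at hz
        exact hPsub z (π.support_takeUntil_subset haP hz)
    exact fun a b => (hhub a).trans (hhub b).symm
  -- no cut vertex in B'
  have hnocut : HasNoCutVertex (H.induce B') := by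
    rintro ⟨v, hvB'⟩ hcut
    apply hcut
    -- hub: the vertex everything connects to, avoiding v
    have hxB' : x ∈ B' := hBsub hxB
    have hu₁x : u₁ ≠ x := Ne.symm hxne
    have hxP : x ∉ π.support := fun hxP => hxne (hPB x hxP hxB)
    have core : ∀ (hub : V), hub ∈ B → hub ≠ v →
        (∀ a ∈ π.support, a ≠ v → ∃ p : H.Walk a hub, ∀ z ∈ p.support, z ∈ B' ∧ z ≠ v) →
        ∀ a ∈ B', a ≠ v → ∃ p : H.Walk a hub, ∀ z ∈ p.support, z ∈ B' ∧ z ≠ v := by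
      intro hub hhubB hhubv hP a haB' hav
      rcases haB' with haB | haP
      · by_cases hah : a = hub
        · subst hah
          exact ⟨SimpleGraph.Walk.nil, by simp [hBsub hhubB, hhubv]⟩
        · refine ⟨SimpleGraph.Walk.cons (hpw haB hhubB hah) SimpleGraph.Walk.nil, ?_⟩
          intro z hz
          simp only [SimpleGraph.Walk.support_cons, SimpleGraph.Walk.support_nil,
            List.mem_cons, List.mem_singleton] at hz
          rcases hz with rfl | rfl | h
          · exact ⟨hBsub haB, hav⟩
          · exact ⟨hBsub hhubB, hhubv⟩
          · exact absurd h (by simp)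
      · exact hP a haP hav
    suffices hcore : ∃ hub, ∀ a ∈ B', a ≠ v → ∃ p : H.Walk a hub,
        ∀ z ∈ p.support, z ∈ B' ∧ z ≠ v by
      obtain ⟨hub, hcore⟩ := hcore
      rintro ⟨⟨a, haB'⟩, ha⟩ ⟨⟨b, hbB'⟩, hb⟩
      have hane : a ≠ v := fun h => ha (by
        simp only [Set.mem_singleton_iff]; exact Subtype.ext h)
      have hbne : b ≠ v := fun h => hb (by
        simp only [Set.mem_singleton_iff]; exact Subtype.ext h)
      obtain ⟨pa, hpa⟩ := hcore a haB' hane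
      obtain ⟨pb, hpb⟩ := hcore b hbB' hbne
      have hpc : ∀ z ∈ (pa.append pb.reverse).support, z ∈ B' ∧ z ≠ v := by
        intro z hz
        rw [SimpleGraph.Walk.mem_support_append_iff] at hz
        rcases hz with hz | hz
        · exact hpa z hz
        · rw [SimpleGraph.Walk.support_reverse, List.mem_reverse] at hz
          exact hpb z hz
      obtain ⟨q, hq⟩ := walk_lift (pa.append pb.reverse)
        (fun z hz => (hpc z hz).1) haB' hbB'
      refine reach_lift q ?_ ha hb
      intro z hz
      simp only [Set.mem_compl_iff, Set.mem_singleton_iff]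
      exact fun h => (hpc _ (hq z hz)).2 (congrArg Subtype.val h)
    by_cases hvx : v = x
    · -- hub u₁ : here v = x is not on π
      have hvP : v ∉ π.support := fun hp => hxP (hvx ▸ hp)
      have hu₁v : u₁ ≠ v := fun h => hu₁x (h.trans hvx)
      refine ⟨u₁, core u₁ hu₁B hu₁v ?_⟩
      intro a haP hav
      refine ⟨(π.takeUntil a haP).reverse, ?_⟩
      intro z hz
      rw [SimpleGraph.Walk.support_reverse, List.mem_reverse] at hz
      have hzP := π.support_takeUntil_subset haP hz
      exact ⟨hPsub _ hzP, fun h => hvP (h ▸ hzP)⟩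
    · -- hub x
      refine ⟨x, core x hxB (Ne.symm hvx) ?_⟩
      intro a haP hav
      by_cases hvP : v ∈ π.support
      · have hsplit : a ∈ (π.takeUntil v hvP).support ∨ a ∈ (π.dropUntil v hvP).support := by
          have h2 : a ∈ ((π.takeUntil v hvP).append (π.dropUntil v hvP)).support := by
            rw [π.take_spec hvP]; exact haP
          rw [SimpleGraph.Walk.mem_support_append_iff] at h2
          exact h2
        rcases hsplit with hat | had
        · -- a is on the prefix before v : go back to u₁, then to x
          set σ := π.takeUntil v hvP with hσ
          have hσp : σ.IsPath := hπp.takeUntil hvP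
          set τ := σ.takeUntil a hat with hτ
          have hvτ : v ∉ τ.support := by
            intro hvτ
            have hdecomp : τ.support ++ (σ.dropUntil a hat).support.tail = σ.support := by
              rw [hτ, ← SimpleGraph.Walk.support_append, SimpleGraph.Walk.take_spec]
            have hnd : (τ.support ++ (σ.dropUntil a hat).support.tail).Nodup := by
              rw [hdecomp]; exact hσp.support_nodup
            have hdisj := List.disjoint_of_nodup_append hnd
            have hvdrop : v ∈ (σ.dropUntil a hat).support.tail := by
              have hv2 : v ∈ (σ.dropUntil a hat).support :=
                (σ.dropUntil a hat).end_mem_support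
              rw [SimpleGraph.Walk.support_eq_cons] at hv2
              rcases List.mem_cons.mp hv2 with h | h
              · exact absurd h.symm hav
              · exact h
            exact hdisj hvτ hvdrop
          refine ⟨τ.reverse.concat (hpw hu₁B hxB hu₁x), ?_⟩
          intro z hz
          rw [SimpleGraph.Walk.support_concat, List.mem_append] at hz
          rcases hz with hz | hz
          · rw [SimpleGraph.Walk.support_reverse, List.mem_reverse] at hz
            have hzP := π.support_takeUntil_subset hvP (σ.support_takeUntil_subset hat hz)
            exact ⟨hPsub _ hzP, fun h => hvτ (h ▸ hz)⟩
          · rw [List.mem_singleton] at hz; subst hz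
            exact ⟨hxB', Ne.symm hvx⟩
        · -- a is on the suffix after v : go forward to w, then to x
          set δ := π.dropUntil v hvP with hδ
          have hδp : δ.IsPath := hπp.dropUntil hvP
          set ρ := δ.dropUntil a had with hρ
          have hvρ : v ∉ ρ.support := by
            intro hvρ
            have hdecomp : (δ.takeUntil a had).support ++ ρ.support.tail = δ.support := by
              rw [hρ, ← SimpleGraph.Walk.support_append, SimpleGraph.Walk.take_spec]
            have hnd : ((δ.takeUntil a had).support ++ ρ.support.tail).Nodup := by
              rw [hdecomp]; exact hδp.support_nodup
            have hdisj := List.disjoint_of_nodup_append hnd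
            have hvtail : v ∈ ρ.support.tail := by
              rw [SimpleGraph.Walk.support_eq_cons] at hvρ
              rcases List.mem_cons.mp hvρ with h | h
              · exact absurd h.symm hav
              · exact h
            exact hdisj (δ.takeUntil a had).start_mem_support hvtail
          refine ⟨ρ.concat hadj, ?_⟩
          intro z hz
          rw [SimpleGraph.Walk.support_concat, List.mem_append] at hz
          rcases hz with hz | hz
          · have hzP := π.support_dropUntil_subset hvP (δ.support_dropUntil_subset had hz)
            exact ⟨hPsub _ hzP, fun h => hvρ (h ▸ hz)⟩
          · rw [List.mem_singleton] at hz; subst hz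
            exact ⟨hxB', Ne.symm hvx⟩
      · -- v is not on π at all : prefix to u₁, then to x
        have hu₁v : u₁ ≠ v := fun h => hvP (h ▸ π.start_mem_support)
        refine ⟨(π.takeUntil a haP).reverse.concat (hpw hu₁B hxB hu₁x), ?_⟩
        intro z hz
        rw [SimpleGraph.Walk.support_concat, List.mem_append] at hz
        rcases hz with hz | hz
        · rw [SimpleGraph.Walk.support_reverse, List.mem_reverse] at hz
          have hzP := π.support_takeUntil_subset haP hz
          exact ⟨hPsub _ hzP, fun h => hvP (h ▸ hzP)⟩
        · rw [List.mem_singleton] at hz; subst hz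
          exact ⟨hxB', Ne.symm hvx⟩
  -- maximality contradiction
  have := hB.2.2 B' hBsub hconn hnocut
  exact hwB (this ▸ (hPsub w π.end_mem_support))

theorem stmt_10 {V : Type*} [Fintype V] (H : SimpleGraph V) (hH : H.Connected)
    (hbg : IsBlockGraph H) (B : Set V) (hB : IsBlock H B)
    (k : ℕ) (hk : 0 < k) (u : Fin k → V) (huinj : Function.Injective u)
    (hurange : Set.range u = B)
    (G' : Fin k → Set V) (hG' : ∀ i : Fin k, G' i = componentOf H (Bᶜ ∪ {u i}) (u i))
    (S : Set V) (hpd : PairedDominating H S) (hu₁ : u ⟨0, hk⟩ ∉ S) :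
    u ⟨0, hk⟩ ∉ S ∩ G' ⟨0, hk⟩ ∧
      HasPerfectMatchingOn H (S ∩ G' ⟨0, hk⟩) ∧
      (∀ v ∈ G' ⟨0, hk⟩, v ∉ S ∩ G' ⟨0, hk⟩ → v ≠ u ⟨0, hk⟩ →
        ∃ w ∈ S ∩ G' ⟨0, hk⟩, H.Adj v w) ∧
      ((DominatingOn H (G' ⟨0, hk⟩) (S ∩ G' ⟨0, hk⟩) ∧
          HasPerfectMatchingOn H (S ∩ G' ⟨0, hk⟩) ∧ u ⟨0, hk⟩ ∉ S ∩ G' ⟨0, hk⟩) ∨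
        (DominatingOn H (G' ⟨0, hk⟩ \ {u ⟨0, hk⟩}) (S ∩ G' ⟨0, hk⟩) ∧
          HasPerfectMatchingOn H (S ∩ G' ⟨0, hk⟩) ∧
          ∀ w ∈ S ∩ G' ⟨0, hk⟩, ¬ H.Adj (u ⟨0, hk⟩) w)) := by
  classical
  set u₁ : V := u ⟨0, hk⟩ with hu₁def
  rw [hG' ⟨0, hk⟩]
  set G₁ : Set V := componentOf H (Bᶜ ∪ {u₁}) u₁ with hG₁def
  have hpw : B.Pairwise H.Adj := hbg B hB
  have hu₁B : u₁ ∈ B := hurange ▸ Set.mem_range_self _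
  obtain ⟨hdom, M, hMv, hMm⟩ := hpd
  -- the key structural lemma: neighbours of vertices of G₁ ∖ {u₁} stay in G₁
  have key : ∀ v ∈ G₁, v ≠ u₁ → ∀ x, H.Adj v x → x ∈ G₁ := by
    rintro v hv hvne x hadj
    obtain ⟨hu, hvA, hreach⟩ := hv
    by_cases hxB : x ∈ B
    · by_cases hxu : x = u₁
      · subst hxu
        exact ⟨hu, hu, Reachable.refl _⟩
      · exact absurd hadj (fun h => lemA hB hpw hu₁B ⟨hu, hvA, hreach⟩ hvne hxB hxu h)
    · have hxA : x ∈ Bᶜ ∪ {u₁} := Or.inl hxB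
      exact ⟨hu, hxA, hreach.trans (Adj.reachable
        (show (H.induce (Bᶜ ∪ {u₁})).Adj ⟨v, hvA⟩ ⟨x, hxA⟩ from hadj))⟩
  have b1 : u₁ ∉ S ∩ G₁ := fun h => hu₁ h.1
  have hpm : HasPerfectMatchingOn H (S ∩ G₁) := by
    refine ⟨M.induce (S ∩ G₁), rfl, ?_⟩
    rintro v ⟨hvS, hvG⟩
    obtain ⟨w, hw, hwu⟩ := hMm (show v ∈ M.verts from hMv ▸ hvS)
    have hvne : v ≠ u₁ := fun h => hu₁ (h ▸ hvS)
    have hwS : w ∈ S := hMv ▸ (M.edge_vert hw.symm)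
    have hwG : w ∈ G₁ := key v hvG hvne w (M.adj_sub hw)
    refine ⟨w, ⟨⟨hvS, hvG⟩, ⟨hwS, hwG⟩, hw⟩, ?_⟩
    rintro y ⟨-, -, hy⟩
    exact hwu y hy
  have b3 : ∀ v ∈ G₁, v ∉ S ∩ G₁ → v ≠ u₁ → ∃ w ∈ S ∩ G₁, H.Adj v w := by
    intro v hvG hvS hvne
    have hvS' : v ∉ S := fun h => hvS ⟨h, hvG⟩
    obtain ⟨w, hwS, hwadj⟩ := hdom v hvS'
    exact ⟨w, ⟨hwS, key v hvG hvne w hwadj⟩, hwadj⟩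
  refine ⟨b1, hpm, b3, ?_⟩
  by_cases hcase : ∃ w ∈ S ∩ G₁, H.Adj u₁ w
  · left
    refine ⟨?_, hpm, b1⟩
    intro v hvG hvS
    by_cases hvu : v = u₁
    · subst hvu; exact hcase
    · exact b3 v hvG hvS hvu
  · right
    push_neg at hcase
    refine ⟨?_, hpm, hcase⟩
    rintro v ⟨hvG, hvne⟩ hvS
    exact b3 v hvG hvS hvne
end

section
/- Let H be a connected finite simple block graph and let B be a block of H with vertex set V(B) = {u_1, u_2, …, u_k}. For each 1 ≤ i ≤ k, let G_i denote the connected component containing u_i of the subgraph of H induced by (V(H) ∖ V(B)) ∪ {u_i}, and for S ⊆ V(H) write S_i = S ∩ V(G_i). Suppose S ⊆ V(H) ∖ {u_1} is a dominating set of the graph H − u_1, no vertex of S is adjacent to u_1 in H, and the induced subgraph H[S] has a perfect matching. Then S ∩ V(B) = ∅; the set S_1 dominates every vertex of V(G_1) ∖ ({u_1} ∪ S_1), no vertex of S_1 is adjacent to u_1, and G_1[S_1] has a perfect matching; and for each 2 ≤ i ≤ k, the set S_i is a paired-dominating set of G_i with u_i ∉ S_i. -/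
open SimpleGraph

variable {V : Type*}

theorem stmt_11 {V : Type*} [Fintype V] (H : SimpleGraph V) (hH : H.Connected)
    (hbg : IsBlockGraph H) (B : Set V) (hB : IsBlock H B)
    (k : ℕ) (hk : 0 < k) (u : Fin k → V) (huinj : Function.Injective u)
    (hurange : Set.range u = B)
    (G' : Fin k → Set V) (hG' : ∀ i : Fin k, G' i = componentOf H (Bᶜ ∪ {u i}) (u i))
    (S : Set V) (hSsub : S ⊆ ({u ⟨0, hk⟩}ᶜ : Set V))
    (hdom : DominatingOn H ({u ⟨0, hk⟩}ᶜ : Set V) S)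
    (hnadj : ∀ w ∈ S, ¬ H.Adj (u ⟨0, hk⟩) w)
    (hpm : HasPerfectMatchingOn H S) :
    S ∩ B = ∅ ∧
      (∀ v ∈ G' ⟨0, hk⟩, v ∉ S ∩ G' ⟨0, hk⟩ → v ≠ u ⟨0, hk⟩ →
        ∃ w ∈ S ∩ G' ⟨0, hk⟩, H.Adj v w) ∧
      (∀ w ∈ S ∩ G' ⟨0, hk⟩, ¬ H.Adj (u ⟨0, hk⟩) w) ∧
      HasPerfectMatchingOn H (S ∩ G' ⟨0, hk⟩) ∧
      (∀ i : Fin k, i ≠ ⟨0, hk⟩ →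
        DominatingOn H (G' i) (S ∩ G' i) ∧
          HasPerfectMatchingOn H (S ∩ G' i) ∧ u i ∉ S ∩ G' i) := by
  classical
  obtain ⟨M, hMverts, hM⟩ := hpm
  set u0 := u ⟨0, hk⟩ with hu0
  have hu0B : u0 ∈ B := hurange ▸ ⟨⟨0, hk⟩, rfl⟩
  have hBadj : B.Pairwise H.Adj := hbg B hB
  -- S ∩ B = ∅
  have hSB : S ∩ B = ∅ := by
    ext b
    simp only [Set.mem_inter_iff, Set.mem_empty_iff_false, iff_false, not_and]
    intro hbS hbB
    by_cases hb : b = u0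
    · exact hSsub hbS (by simp [hb])
    · exact hnadj b hbS (hBadj hu0B hbB (fun h => hb h.symm))
  -- closure of components under adjacency outside B
  have hclose : ∀ (i : Fin k) (x y : V), x ∈ G' i → y ∉ B → H.Adj x y → y ∈ G' i := by
    intro i x y hx hy hadj
    rw [hG'] at hx ⊢
    obtain ⟨hui, hxA, hreach⟩ := hx
    have hyA : y ∈ Bᶜ ∪ {u i} := Or.inl hy
    refine ⟨hui, hyA, hreach.trans (Adj.reachable ?_)⟩
    exact hadj
  have hGsub : ∀ (i : Fin k) (x : V), x ∈ G' i → x ∈ Bᶜ ∪ {u i} := by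
    intro i x hx
    rw [hG'] at hx
    exact hx.2.1
  -- unified domination lemma
  have hdomi : ∀ (i : Fin k), ∀ v ∈ G' i, v ∉ S ∩ G' i → v ≠ u0 →
      ∃ w ∈ S ∩ G' i, H.Adj v w := by
    intro i v hv hvS hvu0
    have hvnS : v ∉ S := fun h => hvS ⟨h, hv⟩
    obtain ⟨w, hwS, hadj⟩ := hdom v (by simpa using hvu0) hvnS
    have hwB : w ∉ B := fun h => (Set.eq_empty_iff_forall_notMem.mp hSB w) ⟨hwS, h⟩
    exact ⟨w, ⟨hwS, hclose i v w hv hwB hadj⟩, hadj⟩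
  -- unified matching lemma
  have hmatchi : ∀ i : Fin k, HasPerfectMatchingOn H (S ∩ G' i) := by
    intro i
    refine ⟨M.induce (S ∩ G' i), rfl, ?_⟩
    intro v hv
    have hvS : v ∈ M.verts := hMverts ▸ hv.1
    obtain ⟨w, hw, hwuniq⟩ := hM hvS
    have hwS : w ∈ S := hMverts ▸ hw.snd_mem
    have hwB : w ∉ B := fun h => (Set.eq_empty_iff_forall_notMem.mp hSB w) ⟨hwS, h⟩
    have hwG : w ∈ G' i := hclose i v w hv.2 hwB (M.adj_sub hw)
    refine ⟨w, ⟨hv, ⟨hwS, hwG⟩, hw⟩, ?_⟩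
    intro y hy
    exact hwuniq y hy.2.2
  refine ⟨hSB, hdomi ⟨0, hk⟩, fun w hw => hnadj w hw.1, hmatchi ⟨0, hk⟩, ?_⟩
  intro i hi
  have huiB : u i ∈ B := hurange ▸ ⟨i, rfl⟩
  refine ⟨?_, hmatchi i, fun h => (Set.eq_empty_iff_forall_notMem.mp hSB (u i)) ⟨h.1, huiB⟩⟩
  intro v hv hvS
  have hvu0 : v ≠ u0 := by
    intro h
    have := hGsub i v hv
    rcases this with h' | h'
    · exact h' (h ▸ hu0B)
    · exact hi (huinj (by rw [← h', h]))
  exact hdomi i v hv hvS hvu0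
end

section
/- Let H be a connected finite simple block graph and let B be a block of H with vertex set V(B) = {u_1, u_2, …, u_k}. For each 1 ≤ i ≤ k, let G_i denote the connected component containing u_i of the subgraph of H induced by (V(H) ∖ V(B)) ∪ {u_i}. Suppose T_1 ⊆ V(G_1) ∖ {u_1} is such that T_1 dominates every vertex of V(G_1) ∖ ({u_1} ∪ T_1), no vertex of T_1 is adjacent to u_1, and G_1[T_1] has a perfect matching; and suppose for each 2 ≤ i ≤ k that T_i is a paired-dominating set of G_i with u_i ∉ T_i. Then S = T_1 ∪ T_2 ∪ … ∪ T_k is a dominating set of the graph H − u_1, no vertex of S is adjacent to u_1 in H, and the induced subgraph H[S] has a perfect matching. -/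
open SimpleGraph

variable {V : Type*}

-- helpers
lemma lift_reach {W : Type*} {H : SimpleGraph V} {G2 : SimpleGraph W} {f : W → V}
    (hf : Function.Injective f)
    (hadj : ∀ a b : W, H.Adj (f a) (f b) → G2.Adj a b) :
    ∀ {c d : V} (p : H.Walk c d),
      (∀ z ∈ p.support, z ∈ Set.range f) → ∀ x y : W, f x = c → f y = d →
        G2.Reachable x y := by
  intro c d p
  induction p with
  | nil =>
    intro _ x y hx hy
    cases hf (hx.trans hy.symm)
    exact Reachable.refl _
  | @cons a m e h q ih =>
    intro hsup x y hx hy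
    obtain ⟨x', hx'⟩ := hsup m (by simp)
    refine (Adj.reachable (hadj x x' ?_)).trans (ih ?_ x' y hx' hy)
    · rw [hx, hx']; exact h
    · intro z hz; exact hsup z (by simp [hz])

lemma lower_reach {W : Type*} {H : SimpleGraph V} {G2 : SimpleGraph W} {f : W → V}
    (hadj : ∀ a b : W, G2.Adj a b → H.Adj (f a) (f b)) {x y : W}
    (h : G2.Reachable x y) :
    ∃ p : H.Walk (f x) (f y), ∀ z ∈ p.support, z ∈ Set.range f := by
  obtain ⟨q⟩ := h
  refine ⟨q.map ⟨f, fun h' => hadj _ _ h'⟩, ?_⟩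
  intro z hz
  rw [Walk.support_map] at hz
  obtain ⟨w, _, rfl⟩ := List.mem_map.mp hz
  exact ⟨w, rfl⟩

lemma componentOf_walk {H : SimpleGraph V} {A : Set V} {u v : V}
    (h : v ∈ componentOf H A u) : ∃ W : H.Walk u v, ∀ z ∈ W.support, z ∈ A := by
  obtain ⟨hu, hv, hr⟩ := h
  obtain ⟨p, hp⟩ := lower_reach (f := (Subtype.val : A → V)) (fun a b h' => h') hr
  exact ⟨p, fun z hz => by simpa using hp z hz⟩

lemma walk_componentOf {H : SimpleGraph V} {A : Set V} {u v : V} (W : H.Walk u v)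
    (h : ∀ z ∈ W.support, z ∈ A) : v ∈ componentOf H A u := by
  refine ⟨h u W.start_mem_support, h v W.end_mem_support, ?_⟩
  exact lift_reach Subtype.val_injective (fun a b h' => h') W
    (fun z hz => by simpa using h z hz) _ _ rfl rfl

lemma walk_in_B {H : SimpleGraph V} {B : Set V} (hconn : (H.induce B).Connected)
    (hnc : HasNoCutVertex (H.induce B)) {x t v : V} (hx : x ∈ B) (ht : t ∈ B)
    (hxv : x ≠ v) (htv : t ≠ v) :
    ∃ p : H.Walk x t, ∀ z ∈ p.support, z ∈ B ∧ z ≠ v := by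
  by_cases hv : v ∈ B
  · have hpre : ((H.induce B).induce ({(⟨v, hv⟩ : B)}ᶜ : Set B)).Preconnected :=
      not_not.mp (hnc ⟨v, hv⟩)
    have mx : (⟨x, hx⟩ : B) ∈ ({(⟨v, hv⟩ : B)}ᶜ : Set B) := by
      simp [Subtype.ext_iff, hxv]
    have mt : (⟨t, ht⟩ : B) ∈ ({(⟨v, hv⟩ : B)}ᶜ : Set B) := by
      simp [Subtype.ext_iff, htv]
    have hr := hpre ⟨⟨x, hx⟩, mx⟩ ⟨⟨t, ht⟩, mt⟩
    obtain ⟨p, hp⟩ := lower_reach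
      (f := fun z : ({(⟨v, hv⟩ : B)}ᶜ : Set B) => (z.1.1 : V))
      (fun a b h' => h') hr
    refine ⟨p, fun z hz => ?_⟩
    obtain ⟨w, rfl⟩ := hp z hz
    refine ⟨w.1.2, fun h => ?_⟩
    exact w.2 (by simp [Subtype.ext_iff, h])
  · obtain ⟨p, hp⟩ := lower_reach (f := (Subtype.val : B → V)) (fun a b h' => h')
      (hconn.preconnected ⟨x, hx⟩ ⟨t, ht⟩)
    refine ⟨p, fun z hz => ?_⟩
    have hzB : z ∈ B := by simpa using hp z hz
    exact ⟨hzB, fun h => hv (h ▸ hzB)⟩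

lemma not_mem_takeUntil_support {H : SimpleGraph V} [DecidableEq V] {c v : V}
    {P : H.Walk c v} (hP : P.support.Nodup) {z : V} (hz : z ∈ P.support) (hzv : z ≠ v) :
    v ∉ (P.takeUntil z hz).support := by
  intro hv
  have hsupp : P.support
      = (P.takeUntil z hz).support ++ (P.dropUntil z hz).support.tail := by
    rw [← Walk.support_append, P.take_spec hz]
  rw [hsupp] at hP
  have hdisj := (List.nodup_append'.mp hP).2.2
  have hv2 : v ∈ (P.dropUntil z hz).support.tail := by
    have h1 := (P.dropUntil z hz).end_mem_support
    rw [Walk.support_eq_cons] at h1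
    rcases List.mem_cons.mp h1 with h | h
    · exact absurd h.symm hzv
    · exact h
  exact hdisj hv hv2

lemma not_mem_dropUntil_support {H : SimpleGraph V} [DecidableEq V] {c v : V}
    {P : H.Walk v c} (hP : P.support.Nodup) {z : V} (hz : z ∈ P.support) (hzv : z ≠ v) :
    v ∉ (P.dropUntil z hz).support := by
  intro hv
  have hsupp : P.support
      = (P.takeUntil z hz).support ++ (P.dropUntil z hz).support.tail := by
    rw [← Walk.support_append, P.take_spec hz]
  rw [hsupp] at hP
  have hdisj := (List.nodup_append'.mp hP).2.2
  have hv2 : v ∈ (P.dropUntil z hz).support.tail := by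
    rcases List.mem_cons.mp ((Walk.support_eq_cons _) ▸ hv) with h | h
    · exact absurd h.symm hzv
    · exact h
  exact hdisj (P.takeUntil z hz).start_mem_support hv2

lemma edge_escape {H : SimpleGraph V} {B : Set V} {c x y : V} (W : H.Walk x y)
    (hs : ∀ z ∈ W.support, z ∈ B → z = c) :
    ∀ e ∈ W.edges, ∃ z ∈ e, z ∉ B := by
  intro e he
  revert he
  refine e.ind fun a b he => ?_
  by_contra hcon
  push_neg at hcon
  have haB : a ∈ B := hcon a (Sym2.mem_mk_left a b)
  have hbB : b ∈ B := hcon b (Sym2.mem_mk_right a b)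
  have hne : a ≠ b := (Walk.edges_subset_edgeSet W he).ne
  exact hne ((hs a (W.fst_mem_support_of_mem_edges he) haB).trans
    (hs b (W.snd_mem_support_of_mem_edges he) hbB).symm)

lemma one_attach {H : SimpleGraph V} {B : Set V} (hB : IsBlock H B)
    {a b : V} (ha : a ∈ B) (hb : b ∈ B) (hab : a ≠ b) (W : H.Walk a b)
    (hsup : ∀ x ∈ W.support, x ∈ B → x = a ∨ x = b)
    (hedge : ∀ e ∈ W.edges, ∃ z ∈ e, z ∉ B) : False := by
  classical
  set p := W.bypass with hpdef
  have hp : p.IsPath := W.bypass_isPath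
  have hsupP : ∀ x ∈ p.support, x ∈ B → x = a ∨ x = b :=
    fun x hx => hsup x (W.support_bypass_subset hx)
  have hedgeP : ∀ e ∈ p.edges, ∃ z ∈ e, z ∉ B :=
    fun e he => hedge e (W.edges_bypass_subset he)
  obtain ⟨y, hay, q, hpq⟩ := Walk.not_nil_iff.mp (Walk.not_nil_of_ne hab (p := p))
  have hyP : y ∈ p.support := by rw [hpq]; simp
  have hyB : y ∉ B := by
    have he : s(a, y) ∈ p.edges := by rw [hpq]; simp
    obtain ⟨z, hz, hzB⟩ := hedgeP _ he
    rcases Sym2.mem_iff.mp hz with rfl | rfl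
    · exact absurd ha hzB
    · exact hzB
  set B' : Set V := B ∪ {x | x ∈ p.support} with hB'def
  have hBB' : B ⊆ B' := Set.subset_union_left
  have haB' : a ∈ B' := Or.inl ha
  -- reach to a within B'
  have reach_to_a : ∀ z (hz : z ∈ B'),
      (H.induce B').Reachable ⟨z, hz⟩ ⟨a, haB'⟩ := by
    intro z hz
    rcases hz with hzB | hzp
    · obtain ⟨r, hr⟩ := lower_reach (f := (Subtype.val : B → V)) (fun _ _ h' => h')
        (hB.1.preconnected ⟨z, hzB⟩ ⟨a, ha⟩)
      refine lift_reach Subtype.val_injective (fun _ _ h' => h') r ?_ _ _ rfl rfl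
      intro w hw
      have : w ∈ B := by simpa using hr w hw
      exact ⟨⟨w, hBB' this⟩, rfl⟩
    · refine lift_reach Subtype.val_injective (fun _ _ h' => h')
        ((p.takeUntil z hzp).reverse) ?_ _ _ rfl rfl
      intro w hw
      rw [Walk.support_reverse, List.mem_reverse] at hw
      exact ⟨⟨w, Or.inr (p.support_takeUntil_subset hzp hw)⟩, rfl⟩
  have hconn' : (H.induce B').Connected := by
    have : Nonempty ↑B' := ⟨⟨a, haB'⟩⟩
    exact ⟨fun x y => (reach_to_a x.1 x.2).trans (reach_to_a y.1 y.2).symm⟩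
  -- no cut vertex
  have hnc' : HasNoCutVertex (H.induce B') := by
    rintro ⟨v, hv⟩ hcut
    apply hcut
    set t : V := if v = a then b else a with htdef
    have ht : t ∈ B := by rw [htdef]; split <;> assumption
    have htv : t ≠ v := by
      rw [htdef]; split
      · rename_i h; rw [h]; exact hab.symm
      · rename_i h; exact fun h' => h h'.symm
    have htB' : t ∈ B' := hBB' ht
    -- walks within B to t avoiding v
    have Bcase : ∀ z ∈ B, z ≠ v → ∃ P : H.Walk z t, ∀ x ∈ P.support, x ∈ B' ∧ x ≠ v := by
      intro z hzB hzv
      obtain ⟨P, hP⟩ := walk_in_B hB.1 hB.2.1 hzB ht hzv htv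
      exact ⟨P, fun x hx => ⟨hBB' (hP x hx).1, (hP x hx).2⟩⟩
    have walkto : ∀ z, z ∈ B' → z ≠ v →
        ∃ P : H.Walk z t, ∀ x ∈ P.support, x ∈ B' ∧ x ≠ v := by
      intro z hz hzv
      by_cases hzB : z ∈ B
      · exact Bcase z hzB hzv
      · have hzp : z ∈ p.support := by
          rcases hz with h | h
          · exact absurd h hzB
          · exact h
        by_cases hvp : v ∈ p.support
        · -- split p at v
          have hsplit : z ∈ (p.takeUntil v hvp).support ∨ z ∈ (p.dropUntil v hvp).support := by
            have : p.support = (p.takeUntil v hvp).support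
                ++ (p.dropUntil v hvp).support.tail := by
              rw [← Walk.support_append, p.take_spec hvp]
            rw [this] at hzp
            rcases List.mem_append.mp hzp with h | h
            · exact Or.inl h
            · exact Or.inr (List.mem_of_mem_tail h)
          rcases hsplit with hz1 | hz2
          · -- prefix: walk z → a avoiding v
            have hq1nodup : (p.takeUntil v hvp).support.Nodup :=
              (hp.takeUntil hvp).support_nodup
            have hvnot : v ∉ ((p.takeUntil v hvp).takeUntil z hz1).support :=
              not_mem_takeUntil_support hq1nodup hz1 hzv
            have hsub : ∀ x ∈ ((p.takeUntil v hvp).takeUntil z hz1).support,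
                x ∈ B' ∧ x ≠ v := by
              intro x hx
              refine ⟨Or.inr (p.support_takeUntil_subset hvp
                ((p.takeUntil v hvp).support_takeUntil_subset hz1 hx)), ?_⟩
              exact fun h => hvnot (h ▸ hx)
            have hav : a ≠ v :=
              (hsub a (Walk.start_mem_support _)).2
            obtain ⟨P2, hP2⟩ := Bcase a ha hav
            refine ⟨(((p.takeUntil v hvp).takeUntil z hz1).reverse).append P2, ?_⟩
            intro x hx
            rcases (Walk.mem_support_append_iff _ _).mp hx with h | h
            · rw [Walk.support_reverse, List.mem_reverse] at h
              exact hsub x h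
            · exact hP2 x h
          · -- suffix: walk z → b avoiding v
            have hq2nodup : (p.dropUntil v hvp).support.Nodup :=
              (hp.dropUntil hvp).support_nodup
            have hvnot : v ∉ ((p.dropUntil v hvp).dropUntil z hz2).support :=
              not_mem_dropUntil_support hq2nodup hz2 hzv
            have hsub : ∀ x ∈ ((p.dropUntil v hvp).dropUntil z hz2).support,
                x ∈ B' ∧ x ≠ v := by
              intro x hx
              refine ⟨Or.inr (p.support_dropUntil_subset hvp
                ((p.dropUntil v hvp).support_dropUntil_subset hz2 hx)), ?_⟩
              exact fun h => hvnot (h ▸ hx)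
            have hbv : b ≠ v :=
              (hsub b (Walk.end_mem_support _)).2
            obtain ⟨P2, hP2⟩ := Bcase b hb hbv
            refine ⟨(((p.dropUntil v hvp).dropUntil z hz2)).append P2, ?_⟩
            intro x hx
            rcases (Walk.mem_support_append_iff _ _).mp hx with h | h
            · exact hsub x h
            · exact hP2 x h
        · -- v not on p : walk z → a along p, then within B
          have hav : a ≠ v := fun h => hvp (h ▸ p.start_mem_support)
          obtain ⟨P2, hP2⟩ := Bcase a ha hav
          refine ⟨((p.takeUntil z hzp).reverse).append P2, ?_⟩
          intro x hx
          rcases (Walk.mem_support_append_iff _ _).mp hx with h | h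
          · rw [Walk.support_reverse, List.mem_reverse] at h
            exact ⟨Or.inr (p.support_takeUntil_subset hzp h),
              fun h' => hvp (h' ▸ p.support_takeUntil_subset hzp h)⟩
          · exact hP2 x h
    rintro ⟨⟨x, hx⟩, hxc⟩ ⟨⟨y', hy'⟩, hyc⟩
    have hxv : x ≠ v := fun h => hxc (by simp [Subtype.ext_iff, h])
    have hyv : y' ≠ v := fun h => hyc (by simp [Subtype.ext_iff, h])
    obtain ⟨P1, hP1⟩ := walkto x hx hxv
    obtain ⟨P2, hP2⟩ := walkto y' hy' hyv
    refine lift_reach (f := fun z : ({(⟨v, hv⟩ : B')}ᶜ : Set B') => (z.1.1 : V))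
      ?_ (fun _ _ h' => h') (P1.append P2.reverse) ?_ _ _ rfl rfl
    · intro w1 w2 h'
      ext
      exact h'
    · intro w hw
      have hw' : w ∈ B' ∧ w ≠ v := by
        rcases (Walk.mem_support_append_iff _ _).mp hw with h | h
        · exact hP1 w h
        · rw [Walk.support_reverse, List.mem_reverse] at h
          exact hP2 w h
      exact ⟨⟨⟨w, hw'.1⟩, by simp [Subtype.ext_iff, hw'.2]⟩, rfl⟩
  have : B' = B := hB.2.2 B' hBB' hconn' hnc'
  exact hyB (this ▸ (Or.inr hyP : y ∈ B'))

lemma attach_comp {H : SimpleGraph V} {B : Set V} :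
    ∀ {v x : V} (_W : H.Walk v x), v ∉ B → x ∈ B →
      ∃ b ∈ B, v ∈ componentOf H (Bᶜ ∪ {b}) b := by
  intro v x W
  induction W with
  | nil => exact fun hv hx => absurd hx hv
  | @cons v c x hadj q ih =>
    intro hv hx
    by_cases hc : c ∈ B
    · refine ⟨c, hc, walk_componentOf (Walk.cons hadj.symm Walk.nil) ?_⟩
      intro z hz
      simp only [Walk.support_cons, Walk.support_nil, List.mem_cons,
        List.mem_singleton] at hz
      rcases hz with rfl | hz
      · exact Or.inr rfl
      · rcases hz with rfl | h
        · exact Or.inl hv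
        · exact absurd h List.not_mem_nil
    · obtain ⟨b, hbB, hcomp⟩ := ih hc hx
      obtain ⟨W1, hW1⟩ := componentOf_walk hcomp
      refine ⟨b, hbB, walk_componentOf (W1.append (Walk.cons hadj.symm Walk.nil)) ?_⟩
      intro z hz
      rcases (Walk.mem_support_append_iff _ _).mp hz with h | h
      · exact hW1 z h
      · simp only [Walk.support_cons, Walk.support_nil, List.mem_cons,
          List.mem_singleton] at h
        rcases h with rfl | h
        · exact Or.inl hc
        · rcases h with rfl | h
          · exact Or.inl hv
          · exact absurd h List.not_mem_nil
theorem stmt_12 {V : Type*} [Fintype V] (H : SimpleGraph V) (hH : H.Connected)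
    (hbg : IsBlockGraph H) (B : Set V) (hB : IsBlock H B)
    (k : ℕ) (hk : 0 < k) (u : Fin k → V) (huinj : Function.Injective u)
    (hurange : Set.range u = B)
    (G' : Fin k → Set V) (hG' : ∀ i : Fin k, G' i = componentOf H (Bᶜ ∪ {u i}) (u i))
    (T : Fin k → Set V)
    (hT₁sub : T ⟨0, hk⟩ ⊆ G' ⟨0, hk⟩ \ {u ⟨0, hk⟩})
    (hT₁dom : ∀ v ∈ G' ⟨0, hk⟩, v ∉ T ⟨0, hk⟩ → v ≠ u ⟨0, hk⟩ →
      ∃ w ∈ T ⟨0, hk⟩, H.Adj v w)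
    (hT₁nadj : ∀ w ∈ T ⟨0, hk⟩, ¬ H.Adj (u ⟨0, hk⟩) w)
    (hT₁pm : HasPerfectMatchingOn H (T ⟨0, hk⟩))
    (hTi : ∀ i : Fin k, i ≠ ⟨0, hk⟩ →
      T i ⊆ G' i ∧ DominatingOn H (G' i) (T i) ∧
        HasPerfectMatchingOn H (T i) ∧ u i ∉ T i) :
    DominatingOn H ({u ⟨0, hk⟩}ᶜ : Set V) (⋃ i : Fin k, T i) ∧
      (∀ w ∈ ⋃ i : Fin k, T i, ¬ H.Adj (u ⟨0, hk⟩) w) ∧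
      HasPerfectMatchingOn H (⋃ i : Fin k, T i) := by
  classical
  set i0 : Fin k := ⟨0, hk⟩ with hi0
  have huB : ∀ i, u i ∈ B := fun i => hurange ▸ Set.mem_range_self i
  have hne : ∀ i j : Fin k, i ≠ j → u i ≠ u j := fun i j h h' => h (huinj h')
  have hTG : ∀ i, T i ⊆ G' i := by
    intro i
    by_cases hi : i = i0
    · subst hi; exact fun w hw => (hT₁sub hw).1
    · exact (hTi i hi).1
  have hTnu : ∀ i, ∀ w ∈ T i, w ≠ u i := by
    intro i w hw
    by_cases hi : i = i0
    · subst hi; exact (hT₁sub hw).2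
    · exact fun h => (hTi i hi).2.2.2 (h ▸ hw)
  have hcomp : ∀ i, ∀ w ∈ G' i, w ∈ componentOf H (Bᶜ ∪ {u i}) (u i) :=
    fun i w h => (hG' i) ▸ h
  have hmemA : ∀ i, ∀ w ∈ G' i, w ∈ (Bᶜ ∪ {u i} : Set V) := by
    intro i w h
    obtain ⟨_, hv, _⟩ := hcomp i w h
    exact hv
  have hTnotB : ∀ i, ∀ w ∈ T i, w ∉ B := by
    intro i w hw hwB
    rcases hmemA i w (hTG i hw) with h | h
    · exact h hwB
    · exact hTnu i w hw h
  -- key: a vertex outside B cannot lie in two different components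
  have key : ∀ i j : Fin k, i ≠ j → ∀ w, w ∉ B →
      w ∈ componentOf H (Bᶜ ∪ {u i}) (u i) →
      w ∈ componentOf H (Bᶜ ∪ {u j}) (u j) → False := by
    intro i j hij w hwB hwi hwj
    obtain ⟨W1, hW1⟩ := componentOf_walk hwi
    obtain ⟨W2, hW2⟩ := componentOf_walk hwj
    have hc1 : ∀ z ∈ W1.support, z ∈ B → z = u i := by
      intro z hz hzB
      rcases hW1 z hz with h | h
      · exact absurd hzB h
      · exact h
    have hc2 : ∀ z ∈ W2.support, z ∈ B → z = u j := by
      intro z hz hzB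
      rcases hW2 z hz with h | h
      · exact absurd hzB h
      · exact h
    have hc2' : ∀ z ∈ W2.reverse.support, z ∈ B → z = u j := by
      intro z hz
      rw [Walk.support_reverse, List.mem_reverse] at hz
      exact hc2 z hz
    refine one_attach hB (huB i) (huB j) (hne i j hij) (W1.append W2.reverse) ?_ ?_
    · intro x hx hxB
      rcases (Walk.mem_support_append_iff _ _).mp hx with h | h
      · exact Or.inl (hc1 x h hxB)
      · exact Or.inr (hc2' x h hxB)
    · intro e he
      rw [Walk.edges_append, List.mem_append] at he
      rcases he with h | h
      · exact edge_escape W1 hc1 e h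
      · exact edge_escape W2.reverse hc2' e h
  -- no vertex of T i (i ≠ i0) is adjacent to u i0
  have fact2 : ∀ i : Fin k, i ≠ i0 → ∀ w ∈ T i, ¬ H.Adj (u i0) w := by
    intro i hi w hw hadj
    have hwB : w ∉ B := hTnotB i w hw
    obtain ⟨W1, hW1⟩ := componentOf_walk (hcomp i w (hTG i hw))
    have hc1 : ∀ z ∈ W1.support, z ∈ B → z = u i := by
      intro z hz hzB
      rcases hW1 z hz with h | h
      · exact absurd hzB h
      · exact h
    refine one_attach hB (huB i) (huB i0) (hne i i0 hi)
      (W1.append (Walk.cons hadj.symm Walk.nil)) ?_ ?_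
    · intro x hx hxB
      rcases (Walk.mem_support_append_iff _ _).mp hx with h | h
      · exact Or.inl (hc1 x h hxB)
      · simp only [Walk.support_cons, Walk.support_nil, List.mem_cons,
          List.mem_singleton] at h
        rcases h with rfl | h
        · exact absurd hxB hwB
        · rcases h with rfl | h
          · exact Or.inr rfl
          · exact absurd h List.not_mem_nil
    · intro e he
      rw [Walk.edges_append, List.mem_append] at he
      rcases he with h | h
      · exact edge_escape W1 hc1 e h
      · simp only [Walk.edges_cons, Walk.edges_nil, List.mem_cons,
          List.not_mem_nil, or_false] at h
        subst h
        exact ⟨w, Sym2.mem_mk_left _ _, hwB⟩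
  -- T's are pairwise disjoint
  have hdisj : ∀ i j : Fin k, i ≠ j → ∀ w, w ∈ T i → w ∈ T j → False := by
    intro i j hij w hwi hwj
    exact key i j hij w (hTnotB i w hwi) (hcomp i w (hTG i hwi))
      (hcomp j w (hTG j hwj))
  refine ⟨?_, ?_, ?_⟩
  · -- domination
    intro v hv hvS
    have hv0 : v ≠ u i0 := by simpa using hv
    by_cases hvB : v ∈ B
    · rw [← hurange] at hvB
      obtain ⟨j, rfl⟩ := hvB
      have hj : j ≠ i0 := fun h => hv0 (by rw [h])
      have hjm : u j ∈ G' j := by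
        rw [hG' j]
        exact ⟨Or.inr rfl, Or.inr rfl, Reachable.refl _⟩
      obtain ⟨w, hw, hadj⟩ := (hTi j hj).2.1 (u j) hjm
        (fun h => hvS (Set.mem_iUnion.mpr ⟨j, h⟩))
      exact ⟨w, Set.mem_iUnion.mpr ⟨j, hw⟩, hadj⟩
    · obtain ⟨W⟩ := hH.preconnected v (u i0)
      obtain ⟨b, hbB, hvcomp⟩ := attach_comp W hvB (huB i0)
      rw [← hurange] at hbB
      obtain ⟨i, rfl⟩ := hbB
      have hvGi : v ∈ G' i := by rw [hG' i]; exact hvcomp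
      have hvT : v ∉ T i := fun h => hvS (Set.mem_iUnion.mpr ⟨i, h⟩)
      by_cases hi : i = i0
      · subst hi
        obtain ⟨w, hw, hadj⟩ := hT₁dom v hvGi hvT hv0
        exact ⟨w, Set.mem_iUnion.mpr ⟨_, hw⟩, hadj⟩
      · obtain ⟨w, hw, hadj⟩ := (hTi i hi).2.1 v hvGi hvT
        exact ⟨w, Set.mem_iUnion.mpr ⟨i, hw⟩, hadj⟩
  · -- no adjacency to u i0
    intro w hw
    obtain ⟨i, hwi⟩ := Set.mem_iUnion.mp hw
    by_cases hi : i = i0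
    · subst hi; exact hT₁nadj w hwi
    · exact fact2 i hi w hwi
  · -- perfect matching
    have hM : ∀ i : Fin k, ∃ M : H.Subgraph, M.verts = T i ∧ M.IsMatching := by
      intro i
      by_cases hi : i = i0
      · subst hi; exact hT₁pm
      · exact (hTi i hi).2.2.1
    choose M hMv hMm using hM
    refine ⟨{ verts := ⋃ i, T i,
              Adj := fun a b => ∃ i, (M i).Adj a b,
              adj_sub := fun ⟨i, h⟩ => (M i).adj_sub h,
              edge_vert := fun ⟨i, h⟩ =>
                Set.mem_iUnion.mpr ⟨i, (hMv i) ▸ (M i).edge_vert h⟩,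
              symm := ⟨fun a b ⟨i, h⟩ => ⟨i, (M i).adj_symm h⟩⟩ }, rfl, ?_⟩
    intro v hv
    obtain ⟨i, hvi⟩ := Set.mem_iUnion.mp hv
    obtain ⟨w, hw, huniq⟩ := hMm i ((hMv i).symm ▸ hvi)
    refine ⟨w, ⟨i, hw⟩, ?_⟩
    rintro y ⟨j, hy⟩
    have hvj : v ∈ T j := (hMv j) ▸ (M j).edge_vert hy
    have hji : j = i := by
      by_contra h
      exact hdisj j i h v hvj hvi
    subst hji
    exact huniq y hy
end

section
/- Let H be a connected finite simple block graph and let B be a block of H with vertex set V(B) = {u_1, u_2, …, u_k}. For each 1 ≤ i ≤ k, let G_i denote the connected component containing u_i of the subgraph of H induced by (V(H) ∖ V(B)) ∪ {u_i}. Suppose S_1 ⊆ V(G_1) is a dominating set of G_1 with u_1 ∈ S_1 such that G_1[S_1 ∖ {u_1}] has a perfect matching, and suppose for each 2 ≤ i ≤ k that S_i ⊆ V(G_i) dominates every vertex of V(G_i) ∖ ({u_i} ∪ S_i). Let J ⊆ {2, …, k} be such that for each i ∈ J we have u_i ∈ S_i and G_i[S_i ∖ {u_i}] has a perfect matching, and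 for each i ∈ {2, …, k} ∖ J the induced subgraph G_i[S_i] has a perfect matching. If |J| is even, then S = S_1 ∪ S_2 ∪ … ∪ S_k is a dominating set of H containing u_1 and H[S ∖ {u_1}] has a perfect matching. -/
open SimpleGraph

variable {V : Type*}

variable {H : SimpleGraph V}

lemma walkIn {A : Set V} : ∀ {a b : V} (p : H.Walk a b), (∀ x ∈ p.support, x ∈ A) →
    ∀ (ha : a ∈ A) (hb : b ∈ A), (H.induce A).Reachable ⟨a, ha⟩ ⟨b, hb⟩ := by
  intro a b p
  induction p with
  | nil => intro _ ha hb; exact Reachable.refl _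
  | @cons a c b h p ih =>
    intro hp ha hb
    have hc : c ∈ A := hp c (by simp [Walk.support_cons])
    exact (Adj.reachable (show (H.induce A).Adj ⟨a, ha⟩ ⟨c, hc⟩ from h)).trans
      (ih (fun x hx => hp x (by simp [Walk.support_cons, hx])) hc hb)

lemma walkOut {A : Set V} : ∀ {a b : ↑A} (_ : (H.induce A).Walk a b),
    ∃ q : H.Walk a.1 b.1, ∀ x ∈ q.support, x ∈ A := by
  intro a b p
  induction p with
  | nil => exact ⟨Walk.nil, by simp⟩
  | @cons a c b h p ih =>
    obtain ⟨q, hq⟩ := ih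
    exact ⟨Walk.cons h q, by
      intro x hx
      rcases (List.mem_cons.mp hx : x = ↑a ∨ x ∈ q.support) with rfl | hx
      · exact a.2
      · exact hq x hx⟩

lemma mem_componentOf {A : Set V} {a v : V} :
    v ∈ componentOf H A a ↔ a ∈ A ∧ v ∈ A ∧ ∃ p : H.Walk a v, ∀ x ∈ p.support, x ∈ A := by
  constructor
  · rintro ⟨hu, hv, hr⟩
    obtain ⟨p⟩ := hr
    obtain ⟨q, hq⟩ := walkOut p
    exact ⟨hu, hv, q, hq⟩
  · rintro ⟨hu, hv, p, hp⟩
    exact ⟨hu, hv, walkIn p hp hu hv⟩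

lemma image_compl_singleton {A : Set V} (x : ↑A) :
    Subtype.val '' ({x}ᶜ : Set ↑A) = A \ {x.1} := by
  ext v
  constructor
  · rintro ⟨y, hy, rfl⟩
    exact ⟨y.2, fun h => hy (Subtype.ext h)⟩
  · rintro ⟨hv, hne⟩
    exact ⟨⟨v, hv⟩, fun h => hne (congrArg Subtype.val h), rfl⟩

lemma doubleInduce_precon {A : Set V} {T : Set ↑A}
    (h : (H.induce (Subtype.val '' T)).Preconnected) :
    ((H.induce A).induce T).Preconnected := by
  intro x y
  have hx : (x : ↑A).1 ∈ Subtype.val '' T := ⟨x.1, x.2, rfl⟩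
  have hy : (y : ↑A).1 ∈ Subtype.val '' T := ⟨y.1, y.2, rfl⟩
  obtain ⟨p⟩ := h ⟨_, hx⟩ ⟨_, hy⟩
  obtain ⟨q, hq⟩ := walkOut p
  have : ∀ {c d : V} (r : H.Walk c d), (∀ z ∈ r.support, z ∈ Subtype.val '' T) →
      ∀ (hc : c ∈ Subtype.val '' T) (hd : d ∈ Subtype.val '' T),
      ∀ (c' d' : ↑T), (c' : ↑A).1 = c → (d' : ↑A).1 = d →
      ((H.induce A).induce T).Reachable c' d' := by
    intro c d r
    induction r with
    | nil =>
      rintro _ _ _ c' d' rfl he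
      have : c' = d' := Subtype.ext (Subtype.ext he.symm)
      rw [this]
    | @cons c e d h r ih =>
      rintro hr hc hd c' d' rfl rfl
      have he : e ∈ Subtype.val '' T := hr e (by simp [Walk.support_cons])
      obtain ⟨e₁, he₁, he₂⟩ := he
      refine (Adj.reachable (show ((H.induce A).induce T).Adj c' ⟨e₁, he₁⟩ from ?_)).trans
        (ih (fun z hz => hr z (by simp [Walk.support_cons, hz])) ⟨e₁, he₁, he₂⟩ hd _ _ he₂ rfl)
      show H.Adj (c' : ↑A).1 (e₁ : ↑A).1
      rw [he₂]; exact h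
  exact this q hq hx hy x y rfl rfl

lemma doubleInduce_precon' {A : Set V} {T : Set ↑A}
    (h : ((H.induce A).induce T).Preconnected) :
    (H.induce (Subtype.val '' T)).Preconnected := by
  rintro ⟨x, x₁, hx₁, rfl⟩ ⟨y, y₁, hy₁, rfl⟩
  obtain ⟨p⟩ := h ⟨x₁, hx₁⟩ ⟨y₁, hy₁⟩
  have : ∀ {c d : ↑T} (_ : ((H.induce A).induce T).Walk c d),
      (H.induce (Subtype.val '' T)).Reachable ⟨(c : ↑A).1, c.1, c.2, rfl⟩ ⟨(d : ↑A).1, d.1, d.2, rfl⟩ := by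
    intro c d r
    induction r with
    | nil => exact Reachable.refl _
    | @cons c e d h r ih =>
      exact (Adj.reachable (show (H.induce (Subtype.val '' T)).Adj ⟨(c : ↑A).1, c.1, c.2, rfl⟩ ⟨(e : ↑A).1, e.1, e.2, rfl⟩ from h)).trans ih
  exact this p
lemma not_end_mem_takeUntil [DecidableEq V] {a b : V} {p : H.Walk a b} (hp : p.IsPath) {c : V}
    (hc : c ∈ p.support) (hne : c ≠ b) : b ∉ (p.takeUntil c hc).support := by
  intro hmem
  have hspec := p.take_spec hc
  have hnodup := hp.support_nodup
  rw [← hspec, Walk.support_append] at hnodup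
  rw [List.nodup_append] at hnodup
  refine hnodup.2.2 b hmem b ?_ rfl
  have hb : b ∈ (p.dropUntil c hc).support := Walk.end_mem_support _
  rw [(p.dropUntil c hc).support_eq_cons] at hb
  rcases List.mem_cons.mp hb with hb | hb
  · exact absurd hb.symm hne
  · exact hb

lemma not_start_mem_dropUntil [DecidableEq V] {a b : V} {p : H.Walk a b} (hp : p.IsPath) {c : V}
    (hc : c ∈ p.support) (hne : c ≠ a) : a ∉ (p.dropUntil c hc).support := by
  intro hmem
  have hspec := p.take_spec hc
  have hnodup := hp.support_nodup
  rw [← hspec, Walk.support_append] at hnodup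
  rw [List.nodup_append] at hnodup
  have ha : a ∈ (p.takeUntil c hc).support := Walk.start_mem_support _
  rw [(p.dropUntil c hc).support_eq_cons] at hmem
  rcases List.mem_cons.mp hmem with hb | hb
  · exact hne hb.symm
  · exact hnodup.2.2 a ha a hb rfl

/-- Every vertex lies in the component attached at some vertex of `B`. -/
lemma cover_aux {B : Set V} : ∀ {v w : V} (_ : H.Walk v w), w ∈ B →
    ∃ z ∈ B, v ∈ componentOf H (Bᶜ ∪ {z}) z := by
  intro v w p
  induction p with
  | @nil a =>
    intro hw
    exact ⟨a, hw, mem_componentOf.mpr ⟨Or.inr rfl, Or.inr rfl, Walk.nil, by simp⟩⟩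
  | @cons v c b h p ih =>
    intro hw
    by_cases hv : v ∈ B
    · exact ⟨v, hv, mem_componentOf.mpr ⟨Or.inr rfl, Or.inr rfl, Walk.nil, by simp⟩⟩
    · obtain ⟨z, hz, hc⟩ := ih hw
      obtain ⟨hw1, _, q, hq⟩ := mem_componentOf.mp hc
      refine ⟨z, hz, mem_componentOf.mpr ⟨hw1, Or.inl hv, q.concat h.symm, ?_⟩⟩
      intro x hx
      rw [Walk.support_concat, List.mem_append] at hx
      rcases hx with hx | hx
      · exact hq x hx
      · rw [List.mem_singleton] at hx
        subst hx
        exact Or.inl hv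
lemma comp_disj {B : Set V} (hB : IsBlock H B) {a b : V} (ha : a ∈ B) (hb : b ∈ B)
    (hab : a ≠ b) {v : V} (hva : v ∈ componentOf H (Bᶜ ∪ {a}) a)
    (hvb : v ∈ componentOf H (Bᶜ ∪ {b}) b) : False := by
  classical
  obtain ⟨-, hvA, p₁, hp₁⟩ := mem_componentOf.mp hva
  obtain ⟨-, hvB2, p₂, hp₂⟩ := mem_componentOf.mp hvb
  have hvC : v ∈ Bᶜ := by
    rcases hvA with h | h
    · exact h
    · rw [Set.mem_singleton_iff] at h
      subst h
      rcases hvB2 with h2 | h2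
      · exact h2
      · exact absurd (Set.mem_singleton_iff.mp h2) hab
  have hav : a ≠ v := fun h => hvC (h ▸ ha)
  have hbv : b ≠ v := fun h => hvC (h ▸ hb)
  -- extract first edges of bypassed paths
  obtain ⟨w₁, h₁, t₁, he₁⟩ := Walk.exists_eq_cons_of_ne hav p₁.bypass
  obtain ⟨w₂, h₂, t₂, he₂⟩ := Walk.exists_eq_cons_of_ne hbv p₂.bypass
  have hq₁path := p₁.bypass_isPath
  have hq₂path := p₂.bypass_isPath
  rw [he₁] at hq₁path
  rw [he₂] at hq₂path
  have ht₁supp : ∀ x ∈ t₁.support, x ∈ Bᶜ := by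
    intro x hx
    have hx' : x ∈ Bᶜ ∪ {a} := hp₁ x (p₁.support_bypass_subset (by rw [he₁]; simp [Walk.support_cons, hx]))
    rcases hx' with h | h
    · exact h
    · rw [Set.mem_singleton_iff] at h
      subst h
      exact absurd hx ((Walk.cons_isPath_iff _ _).mp hq₁path).2
  have ht₂supp : ∀ x ∈ t₂.support, x ∈ Bᶜ := by
    intro x hx
    have hx' : x ∈ Bᶜ ∪ {b} := hp₂ x (p₂.support_bypass_subset (by rw [he₂]; simp [Walk.support_cons, hx]))
    rcases hx' with h | h
    · exact h
    · rw [Set.mem_singleton_iff] at h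
      subst h
      exact absurd hx ((Walk.cons_isPath_iff _ _).mp hq₂path).2
  -- the connecting path r : w₁ → w₂ inside Bᶜ
  set r := (t₁.append t₂.reverse).bypass with hrdef
  have hrpath : r.IsPath := Walk.bypass_isPath _
  have hrsupp : ∀ x ∈ r.support, x ∈ Bᶜ := by
    intro x hx
    have hx' := (t₁.append t₂.reverse).support_bypass_subset hx
    rw [Walk.mem_support_append_iff] at hx'
    rcases hx' with hx' | hx'
    · exact ht₁supp x hx'
    · rw [Walk.support_reverse, List.mem_reverse] at hx'
      exact ht₂supp x hx'
  set R : Set V := {x | x ∈ r.support} with hRdef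
  set B' : Set V := B ∪ R with hB'def
  have hw₁R : w₁ ∈ R := r.start_mem_support
  have hw₂R : w₂ ∈ R := r.end_mem_support
  have hRB : R ⊆ Bᶜ := fun x hx => hrsupp x hx
  have hBsub : B ⊆ B' := Set.subset_union_left
  -- walks from a (resp. b) to any vertex of R, staying in {a} ∪ R (resp. {b} ∪ R)
  have hreach : ∀ y ∈ R, ∃ q : H.Walk a y, ∀ x ∈ q.support, x ∈ ({a} : Set V) ∪ R := by
    intro y hy
    refine ⟨Walk.cons h₁ (r.takeUntil y hy), ?_⟩
    intro x hx
    rw [Walk.support_cons, List.mem_cons] at hx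
    rcases hx with rfl | hx
    · exact Or.inl rfl
    · exact Or.inr (r.support_takeUntil_subset hy hx)
  have hreach₂ : ∀ y ∈ R, ∃ q : H.Walk b y, ∀ x ∈ q.support, x ∈ ({b} : Set V) ∪ R := by
    intro y hy
    refine ⟨Walk.cons h₂ (r.dropUntil y hy).reverse, ?_⟩
    intro x hx
    rw [Walk.support_cons, List.mem_cons] at hx
    rcases hx with rfl | hx
    · exact Or.inl rfl
    · rw [Walk.support_reverse, List.mem_reverse] at hx
      exact Or.inr (r.support_dropUntil_subset hy hx)
  -- B' is connected
  have hconn : (H.induce B').Connected := by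
    rw [connected_iff]
    refine ⟨?_, ⟨⟨a, hBsub ha⟩⟩⟩
    have key : ∀ z : ↑B', (H.induce B').Reachable z ⟨a, hBsub ha⟩ := by
      rintro ⟨z, hz | hz⟩
      · obtain ⟨q, hq⟩ := walkOut (hB.1.preconnected ⟨z, hz⟩ ⟨a, ha⟩).some
        exact walkIn q (fun x hx => hBsub (hq x hx)) _ _
      · obtain ⟨q, hq⟩ := hreach z hz
        refine (walkIn q (fun x hx => ?_) (hBsub ha) (Or.inr hz)).symm
        rcases hq x hx with h | h
        · rw [Set.mem_singleton_iff] at h; subst h; exact hBsub ha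
        · exact Or.inr h
    intro x y
    exact (key x).trans (key y).symm
  -- B' has no cut vertex
  have hnocut : HasNoCutVertex (H.induce B') := by
    intro x hx
    apply hx
    apply doubleInduce_precon
    rw [image_compl_singleton]
    set D : Set V := B' \ {(x : V)} with hDdef
    by_cases hxB : (x : V) ∈ B
    · -- x is in B
      have hRD : R ⊆ D := fun y hy => ⟨Or.inr hy, fun h => (hRB hy) (h ▸ hxB)⟩
      have hBx : (H.induce (B \ {(x : V)})).Preconnected := by
        have h1 := not_not.mp (hB.2.1 ⟨(x : V), hxB⟩)
        have h2 := doubleInduce_precon' h1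
        rwa [image_compl_singleton] at h2
      obtain ⟨c, hcB, hcx⟩ : ∃ c, c ∈ B ∧ c ≠ (x : V) := by
        by_cases hax : a = (x : V)
        · exact ⟨b, hb, fun h => hab (hax.trans h.symm)⟩
        · exact ⟨a, ha, hax⟩
      have hcD : c ∈ D := ⟨Or.inl hcB, hcx⟩
      have hBxD : ∀ y, y ∈ B → y ≠ (x : V) → ∀ (hyD : y ∈ D),
          (H.induce D).Reachable ⟨y, hyD⟩ ⟨c, hcD⟩ := by
        intro y hyB hyx hyD
        obtain ⟨q, hq⟩ := walkOut (hBx ⟨y, ⟨hyB, hyx⟩⟩ ⟨c, ⟨hcB, hcx⟩⟩).some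
        exact walkIn (A := D) q (fun t ht => ⟨Or.inl (hq t ht).1, (hq t ht).2⟩) _ _
      have key : ∀ z : ↑D, (H.induce D).Reachable z ⟨c, hcD⟩ := by
        rintro ⟨z, hz⟩
        have hzx : z ≠ (x : V) := hz.2
        rcases hz.1 with hzB | hzR
        · exact hBxD z hzB hzx _
        · by_cases hax : a = (x : V)
          · have hbx : b ≠ (x : V) := fun h => hab (hax.trans h.symm)
            obtain ⟨q, hq⟩ := hreach₂ z hzR
            have hr1 : (H.induce D).Reachable ⟨b, ⟨Or.inl hb, hbx⟩⟩ ⟨z, hz⟩ := by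
              refine walkIn q (fun t ht => ?_) _ _
              rcases hq t ht with h | h
              · rw [Set.mem_singleton_iff] at h; subst h; exact ⟨Or.inl hb, hbx⟩
              · exact hRD h
            exact hr1.symm.trans (hBxD b hb hbx _)
          · obtain ⟨q, hq⟩ := hreach z hzR
            have hr1 : (H.induce D).Reachable ⟨a, ⟨Or.inl ha, hax⟩⟩ ⟨z, hz⟩ := by
              refine walkIn q (fun t ht => ?_) _ _
              rcases hq t ht with h | h
              · rw [Set.mem_singleton_iff] at h; subst h; exact ⟨Or.inl ha, hax⟩
              · exact hRD h
            exact hr1.symm.trans (hBxD a ha hax _)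
      intro z₁ z₂
      exact (key z₁).trans (key z₂).symm
    · -- x is in R
      have hxR : (x : V) ∈ r.support := by
        rcases x.2 with h | h
        · exact absurd h hxB
        · exact h
      have hBD : B ⊆ D := fun y hy => ⟨Or.inl hy, fun h => hxB (h ▸ hy)⟩
      have haD : a ∈ D := hBD ha
      have hBreach : ∀ y, y ∈ B → ∀ (hyD : y ∈ D),
          (H.induce D).Reachable ⟨y, hyD⟩ ⟨a, haD⟩ := by
        intro y hyB hyD
        obtain ⟨q, hq⟩ := walkOut (hB.1.preconnected ⟨y, hyB⟩ ⟨a, ha⟩).some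
        exact walkIn q (fun t ht => hBD (hq t ht)) _ _
      have key : ∀ z : ↑D, (H.induce D).Reachable z ⟨a, haD⟩ := by
        rintro ⟨z, hz⟩
        have hzx : z ≠ (x : V) := hz.2
        rcases hz.1 with hzB | hzR
        · exact hBreach z hzB _
        · have hsplit : z ∈ (r.takeUntil (x : V) hxR).support ∨
              z ∈ (r.dropUntil (x : V) hxR).support := by
            have hzr : z ∈ r.support := hzR
            rw [← r.take_spec hxR, Walk.mem_support_append_iff] at hzr
            exact hzr
          rcases hsplit with hz1 | hz1
          · -- takeUntil side: reach a directly
            have htpath : (r.takeUntil (x : V) hxR).IsPath := hrpath.takeUntil hxR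
            have hxs : (x : V) ∉ ((r.takeUntil (x : V) hxR).takeUntil z hz1).support :=
              not_end_mem_takeUntil htpath hz1 hzx
            refine (walkIn (Walk.cons h₁ ((r.takeUntil (x : V) hxR).takeUntil z hz1))
              (fun y hy => ?_) haD hz).symm
            rw [Walk.support_cons, List.mem_cons] at hy
            rcases hy with rfl | hy
            · exact haD
            · have hyR : y ∈ R := r.support_takeUntil_subset hxR
                ((r.takeUntil (x : V) hxR).support_takeUntil_subset hz1 hy)
              exact ⟨Or.inr hyR, fun h => hxs (h ▸ hy)⟩
          · -- dropUntil side: reach b, then a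
            have hdpath : (r.dropUntil (x : V) hxR).IsPath := hrpath.dropUntil hxR
            have hxs : (x : V) ∉ ((r.dropUntil (x : V) hxR).dropUntil z hz1).support :=
              not_start_mem_dropUntil hdpath hz1 hzx
            have hbD : b ∈ D := hBD hb
            have hr1 : (H.induce D).Reachable ⟨b, hbD⟩ ⟨z, hz⟩ := by
              refine walkIn (Walk.cons h₂ ((r.dropUntil (x : V) hxR).dropUntil z hz1).reverse)
                (fun y hy => ?_) hbD hz
              rw [Walk.support_cons, List.mem_cons] at hy
              rcases hy with rfl | hy
              · exact hbD
              · rw [Walk.support_reverse, List.mem_reverse] at hy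
                have hyR : y ∈ R := r.support_dropUntil_subset hxR
                  ((r.dropUntil (x : V) hxR).support_dropUntil_subset hz1 hy)
                exact ⟨Or.inr hyR, fun h => hxs (h ▸ hy)⟩
            exact hr1.symm.trans (hBreach b hb _)
      intro z₁ z₂
      exact (key z₁).trans (key z₂).symm
  have hBB : B' = B := hB.2.2 B' hBsub hconn hnocut
  exact (hRB hw₁R) (hBB ▸ (Or.inr hw₁R : w₁ ∈ B'))
lemma pm_empty : HasPerfectMatchingOn H (∅ : Set V) := by
  refine ⟨⊥, by simp, ?_⟩
  intro v hv
  simp at hv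

lemma pm_union {s t : Set V} (h1 : HasPerfectMatchingOn H s) (h2 : HasPerfectMatchingOn H t)
    (hd : Disjoint s t) : HasPerfectMatchingOn H (s ∪ t) := by
  obtain ⟨M1, hv1, hm1⟩ := h1
  obtain ⟨M2, hv2, hm2⟩ := h2
  refine ⟨M1 ⊔ M2, by rw [Subgraph.verts_sup, hv1, hv2], ?_⟩
  apply hm1.sup hm2
  rw [hm1.support_eq_verts, hm2.support_eq_verts, hv1, hv2]
  exact hd

lemma pm_biUnion {ι : Type*} [DecidableEq ι] (t : Finset ι) (A : ι → Set V)
    (h : ∀ i ∈ t, HasPerfectMatchingOn H (A i))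
    (hd : ∀ i ∈ t, ∀ j ∈ t, i ≠ j → Disjoint (A i) (A j)) :
    HasPerfectMatchingOn H (⋃ i ∈ t, A i) := by
  induction t using Finset.induction_on with
  | empty => simpa using pm_empty
  | @insert a s has ih =>
    rw [Finset.set_biUnion_insert]
    refine pm_union (h a (Finset.mem_insert_self a s))
      (ih (fun i hi => h i (Finset.mem_insert_of_mem hi))
        (fun i hi j hj hij => hd i (Finset.mem_insert_of_mem hi) j (Finset.mem_insert_of_mem hj) hij)) ?_
    rw [Set.disjoint_iUnion₂_right]
    intro i hi
    exact hd a (Finset.mem_insert_self a s) i (Finset.mem_insert_of_mem hi)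
      (fun h' => has (h' ▸ hi))
lemma pm_clique [DecidableEq V] (H : SimpleGraph V) :
    ∀ (T : Finset V), (T : Set V).Pairwise H.Adj → Even T.card →
      HasPerfectMatchingOn H ↑T := by
  intro T
  induction T using Finset.strongInduction with
  | _ T ih =>
    intro hadj he
    rcases Finset.eq_empty_or_nonempty T with rfl | ⟨a, ha⟩
    · simpa using pm_empty
    · have h1 : 1 ≤ T.card := Finset.card_pos.mpr ⟨a, ha⟩
      have h2 : 2 ≤ T.card := by
        rcases he with ⟨m, hm⟩
        omega
      obtain ⟨b, hb⟩ : ((T.erase a)).Nonempty := by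
        rw [← Finset.card_pos, Finset.card_erase_of_mem ha]
        omega
      have hab : a ≠ b := fun h => (Finset.mem_erase.mp hb).1 h.symm
      have hbT : b ∈ T := (Finset.mem_erase.mp hb).2
      have adjab : H.Adj a b := hadj ha hbT hab
      set T' := (T.erase a).erase b with hT'
      have hss : T' ⊂ T :=
        lt_of_le_of_lt (Finset.erase_subset _ _) (Finset.erase_ssubset ha)
      have hadj' : (T' : Set V).Pairwise H.Adj :=
        hadj.mono (by intro x hx; exact (Finset.mem_erase.mp ((Finset.mem_erase.mp hx).2)).2)
      have he' : Even T'.card := by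
        obtain ⟨m, hm⟩ := he
        have hc : T'.card = T.card - 2 := by
          rw [hT', Finset.card_erase_of_mem hb, Finset.card_erase_of_mem ha]
          omega
        exact ⟨m - 1, by omega⟩
      obtain ⟨M, hMv, hMm⟩ := ih T' hss hadj' he'
      refine ⟨H.subgraphOfAdj adjab ⊔ M, ?_, ?_⟩
      · rw [Subgraph.verts_sup, hMv, subgraphOfAdj_verts, hT']
        rw [Finset.coe_erase, Finset.coe_erase]
        ext x
        simp only [Set.mem_union, Set.mem_insert_iff, Set.mem_singleton_iff, Set.mem_diff,
          Finset.mem_coe]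
        constructor
        · rintro ((rfl | rfl) | ⟨⟨hx, _⟩, _⟩)
          · exact ha
          · exact hbT
          · exact hx
        · intro hx
          by_cases hxa : x = a
          · exact Or.inl (Or.inl hxa)
          · by_cases hxb : x = b
            · exact Or.inl (Or.inr hxb)
            · exact Or.inr ⟨⟨hx, hxa⟩, hxb⟩
      · apply (Subgraph.IsMatching.subgraphOfAdj adjab).sup hMm
        rw [(Subgraph.IsMatching.subgraphOfAdj adjab).support_eq_verts,
          hMm.support_eq_verts, hMv, subgraphOfAdj_verts, hT']
        rw [Set.disjoint_left]
        rintro x (rfl | rfl) hx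
        · have hx' := Finset.mem_coe.mp hx
          rw [Finset.mem_erase, Finset.mem_erase] at hx'
          exact hx'.2.1 rfl
        · have hx' := Finset.mem_coe.mp hx
          rw [Finset.mem_erase] at hx'
          exact hx'.1 rfl
theorem stmt_13 {V : Type*} [Fintype V] (H : SimpleGraph V) (hH : H.Connected)
    (hbg : IsBlockGraph H) (B : Set V) (hB : IsBlock H B)
    (k : ℕ) (hk : 0 < k) (u : Fin k → V) (huinj : Function.Injective u)
    (hurange : Set.range u = B)
    (G' : Fin k → Set V) (hG' : ∀ i : Fin k, G' i = componentOf H (Bᶜ ∪ {u i}) (u i))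
    (S : Fin k → Set V) (hSsub : ∀ i : Fin k, S i ⊆ G' i)
    (hS₁dom : DominatingOn H (G' ⟨0, hk⟩) (S ⟨0, hk⟩))
    (hS₁u : u ⟨0, hk⟩ ∈ S ⟨0, hk⟩)
    (hS₁pm : HasPerfectMatchingOn H (S ⟨0, hk⟩ \ {u ⟨0, hk⟩}))
    (hSidom : ∀ i : Fin k, i ≠ ⟨0, hk⟩ →
      ∀ v ∈ G' i, v ∉ S i → v ≠ u i → ∃ w ∈ S i, H.Adj v w)
    (J : Finset (Fin k)) (hJ₁ : ⟨0, hk⟩ ∉ J)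
    (hJ : ∀ i ∈ J, u i ∈ S i ∧ HasPerfectMatchingOn H (S i \ {u i}))
    (hnJ : ∀ i : Fin k, i ≠ ⟨0, hk⟩ → i ∉ J → HasPerfectMatchingOn H (S i))
    (heven : Even J.card) :
    Dominating H (⋃ i : Fin k, S i) ∧ u ⟨0, hk⟩ ∈ ⋃ i : Fin k, S i ∧
      HasPerfectMatchingOn H ((⋃ i : Fin k, S i) \ {u ⟨0, hk⟩}) := by
  classical
  set z : Fin k := ⟨0, hk⟩ with hz
  have hBrange : ∀ i, u i ∈ B := fun i => hurange ▸ Set.mem_range_self i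
  have hadjB : B.Pairwise H.Adj := hbg B hB
  have hG'sub : ∀ i, G' i ⊆ Bᶜ ∪ {u i} := by
    intro i v hv
    rw [hG' i] at hv
    exact (mem_componentOf.mp hv).2.1
  have hdisjG : ∀ i j : Fin k, i ≠ j → ∀ v, v ∈ G' i → v ∈ G' j → False := by
    intro i j hij v hvi hvj
    rw [hG' i] at hvi; rw [hG' j] at hvj
    exact comp_disj hB (hBrange i) (hBrange j) (fun h => hij (huinj h)) hvi hvj
  have hcover : ∀ v : V, ∃ i, v ∈ G' i := by
    intro v
    obtain ⟨p⟩ := hH.preconnected v (u z)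
    obtain ⟨w, hw, hcomp⟩ := cover_aux p (hBrange z)
    obtain ⟨i, rfl⟩ : ∃ i, u i = w := by rw [← hurange] at hw; exact hw
    exact ⟨i, by rw [hG' i]; exact hcomp⟩
  have hu0mem : u z ∈ ⋃ i, S i := Set.mem_iUnion.mpr ⟨z, hS₁u⟩
  refine ⟨?_, hu0mem, ?_⟩
  · intro v hv
    obtain ⟨i, hvi⟩ := hcover v
    by_cases hiz : i = z
    · subst hiz
      obtain ⟨w, hwS, hadj⟩ := hS₁dom v hvi (fun h => hv (Set.mem_iUnion.mpr ⟨z, h⟩))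
      exact ⟨w, Set.mem_iUnion.mpr ⟨z, hwS⟩, hadj⟩
    · by_cases hvu : v = u i
      · subst hvu
        exact ⟨u z, hu0mem, hadjB (hBrange i) (hBrange z) (fun h => hiz (huinj h))⟩
      · obtain ⟨w, hwS, hadj⟩ := hSidom i hiz v hvi (fun h => hv (Set.mem_iUnion.mpr ⟨i, h⟩)) hvu
        exact ⟨w, Set.mem_iUnion.mpr ⟨i, hwS⟩, hadj⟩
  · set A : Fin k → Set V := fun i => if i = z then S z \ {u z} else if i ∈ J then S i \ {u i} else S i with hA
    have hAsub : ∀ i, A i ⊆ S i := by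
      intro i
      rw [hA]; dsimp only
      split_ifs with h1 h2
      · subst h1; exact Set.diff_subset
      · exact Set.diff_subset
      · exact le_refl _
    have hpm : ∀ i ∈ (Finset.univ : Finset (Fin k)), HasPerfectMatchingOn H (A i) := by
      intro i _
      rw [hA]; dsimp only
      split_ifs with h1 h2
      · subst h1; exact hS₁pm
      · exact (hJ i h2).2
      · exact hnJ i h1 h2
    have hdisjA : ∀ i ∈ (Finset.univ : Finset (Fin k)), ∀ j ∈ (Finset.univ : Finset (Fin k)),
        i ≠ j → Disjoint (A i) (A j) := by
      intro i _ j _ hij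
      rw [Set.disjoint_left]
      intro v hvi hvj
      exact hdisjG i j hij v (hSsub i (hAsub i hvi)) (hSsub j (hAsub j hvj))
    have P1 := pm_biUnion Finset.univ A hpm hdisjA
    set T : Finset V := J.image u with hT
    have hTadj : (T : Set V).Pairwise H.Adj := by
      intro x hx y hy hxy
      obtain ⟨i, _, rfl⟩ := Finset.mem_image.mp (Finset.mem_coe.mp hx)
      obtain ⟨j, _, rfl⟩ := Finset.mem_image.mp (Finset.mem_coe.mp hy)
      exact hadjB (hBrange i) (hBrange j) hxy
    have hTcard : Even T.card := by
      rw [hT, Finset.card_image_of_injective _ huinj]; exact heven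
    have P2 := pm_clique H T hTadj hTcard
    have hu0G : ∀ i, i ≠ z → u z ∉ S i := by
      intro i hiz h
      rcases hG'sub i (hSsub i h) with h' | h'
      · exact h' (hBrange z)
      · exact hiz (huinj (Set.mem_singleton_iff.mp h')).symm
    have hdisjT : Disjoint (⋃ i ∈ (Finset.univ : Finset (Fin k)), A i) (T : Set V) := by
      rw [Set.disjoint_left]
      intro v hv hvT
      obtain ⟨j, hjJ, rfl⟩ := Finset.mem_image.mp (Finset.mem_coe.mp hvT)
      rw [Set.mem_iUnion₂] at hv
      obtain ⟨i, _, hvA⟩ := hv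
      rcases hG'sub i (hSsub i (hAsub i hvA)) with h' | h'
      · exact h' (hBrange j)
      · have hij : j = i := huinj (Set.mem_singleton_iff.mp h')
        subst hij
        have hjz : j ≠ z := fun h => hJ₁ (h ▸ hjJ)
        rw [hA] at hvA; simp only [if_neg hjz, if_pos hjJ] at hvA
        exact hvA.2 rfl
    have P3 := pm_union P1 P2 hdisjT
    have hsets : (⋃ i : Fin k, S i) \ {u z} = (⋃ i ∈ (Finset.univ : Finset (Fin k)), A i) ∪ ↑T := by
      ext v
      constructor
      · rintro ⟨hv, hvz⟩
        rw [Set.mem_singleton_iff] at hvz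
        obtain ⟨i, hvi⟩ := Set.mem_iUnion.mp hv
        by_cases hiz : i = z
        · subst hiz
          refine Or.inl (Set.mem_iUnion₂.mpr ⟨z, Finset.mem_univ z, ?_⟩)
          rw [hA]; simp only [if_pos rfl]
          exact ⟨hvi, hvz⟩
        · by_cases hiJ : i ∈ J
          · by_cases hvu : v = u i
            · exact Or.inr (Finset.mem_coe.mpr (Finset.mem_image.mpr ⟨i, hiJ, hvu.symm⟩))
            · refine Or.inl (Set.mem_iUnion₂.mpr ⟨i, Finset.mem_univ i, ?_⟩)
              rw [hA]; simp only [if_neg hiz, if_pos hiJ]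
              exact ⟨hvi, hvu⟩
          · refine Or.inl (Set.mem_iUnion₂.mpr ⟨i, Finset.mem_univ i, ?_⟩)
            rw [hA]; simp only [if_neg hiz, if_neg hiJ]
            exact hvi
      · rintro (hv | hv)
        · obtain ⟨i, _, hvA⟩ := Set.mem_iUnion₂.mp hv
          refine ⟨Set.mem_iUnion.mpr ⟨i, hAsub i hvA⟩, ?_⟩
          rw [Set.mem_singleton_iff]
          by_cases hiz : i = z
          · subst hiz; rw [hA] at hvA; simp only [if_pos rfl] at hvA
            exact hvA.2
          · exact fun h => hu0G i hiz (h ▸ hAsub i hvA)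
        · obtain ⟨j, hjJ, rfl⟩ := Finset.mem_image.mp (Finset.mem_coe.mp hv)
          have hjz : j ≠ z := fun h => hJ₁ (h ▸ hjJ)
          refine ⟨Set.mem_iUnion.mpr ⟨j, (hJ j hjJ).1⟩, ?_⟩
          rw [Set.mem_singleton_iff]
          exact fun h => hjz (huinj h)
    rw [hsets]
    exact P3
end

section
/- Let H be a connected finite simple block graph and let B be a block of H with vertex set V(B) = {u_1, u_2, …, u_k}. For each 1 ≤ i ≤ k, let G_i denote the connected component containing u_i of the subgraph of H induced by (V(H) ∖ V(B)) ∪ {u_i}. Suppose S_1 ⊆ V(G_1) is a dominating set of G_1 with u_1 ∈ S_1, and suppose for each 2 ≤ i ≤ k that S_i ⊆ V(G_i) dominates every vertex of V(G_i) ∖ ({u_i} ∪ S_i). Let J ⊆ {2, …, k} be such that for each i ∈ J we have u_i ∈ S_i and G_i[S_i ∖ {u_i}] has a perfect matching, and for each i ∈ {2, …, k} ∖ J the induced subgraph G_i[S_i] has a perfect matching. Set S = S_1 ∪ S_2 ∪ … ∪ S_k. If either (a) G_1[S_1 ∖ {u_1}] has a perfect matching and |J| is odd, or (b) G_1[S_1]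 has a perfect matching and |J| is even, then S is a paired-dominating set of H containing u_1. -/
open SimpleGraph

variable {V : Type*}

/- ### Auxiliary lemmas -/

lemma reach_of_walk {H : SimpleGraph V} {D : Set V} {y z : V} (p : H.Walk y z)
    (h : ∀ v ∈ p.support, v ∈ D) (hy : y ∈ D) (hz : z ∈ D) :
    (H.induce D).Reachable ⟨y, hy⟩ ⟨z, hz⟩ := by
  induction p with
  | nil => exact Reachable.refl _
  | @cons a c z' hadj p ih =>
      have hc : c ∈ D := h c (by simp)
      have h' : ∀ v ∈ p.support, v ∈ D := fun v hv => h v (by simp [hv])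
      exact Reachable.trans
        ((Walk.cons (show (H.induce D).Adj ⟨a, hy⟩ ⟨c, hc⟩ from hadj) Walk.nil).reachable)
        (ih h' hc hz)

lemma walk_of_reach {H : SimpleGraph V} {D : Set V} {y z : V} (hy : y ∈ D) (hz : z ∈ D)
    (h : (H.induce D).Reachable ⟨y, hy⟩ ⟨z, hz⟩) :
    ∃ p : H.Walk y z, ∀ v ∈ p.support, v ∈ D := by
  obtain ⟨w⟩ := h
  refine ⟨w.map (SimpleGraph.Embedding.induce D).toHom, ?_⟩
  intro v hv
  change v ∈ (w.map (SimpleGraph.Embedding.induce D).toHom).support at hv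
  rw [Walk.support_map] at hv
  obtain ⟨x, hx, rfl⟩ := List.mem_map.mp hv
  exact x.2

lemma cliqueMatching (G : SimpleGraph V) : ∀ (n : ℕ) (U : Finset V), U.card = n →
    (∀ p ∈ U, ∀ q ∈ U, p ≠ q → G.Adj p q) → Even n →
    ∃ M : G.Subgraph, M.verts = ↑U ∧ M.IsMatching := by
  classical
  intro n
  induction n using Nat.strong_induction_on with
  | _ n ih =>
    intro U hcard hadj heven
    rcases Finset.eq_empty_or_nonempty U with rfl | ⟨p, hp⟩
    · exact ⟨⊥, by simp, fun v hv => absurd hv (by simp)⟩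
    · have h1 : 1 ≤ n := hcard ▸ Finset.card_pos.mpr ⟨p, hp⟩
      obtain ⟨m, hm⟩ := heven
      have h2 : 2 ≤ n := by omega
      obtain ⟨q, hq⟩ : ∃ q, q ∈ U.erase p := by
        have : 0 < (U.erase p).card := by
          rw [Finset.card_erase_of_mem hp]; omega
        exact Finset.card_pos.mp this
      have hpq : p ≠ q := (Finset.ne_of_mem_erase hq).symm
      have hqU : q ∈ U := Finset.mem_of_mem_erase hq
      have hadjpq : G.Adj p q := hadj p hp q hqU hpq
      have hc' : ((U.erase p).erase q).card = n - 2 := by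
        rw [Finset.card_erase_of_mem hq, Finset.card_erase_of_mem hp, hcard]; omega
      obtain ⟨M', hM'v, hM'm⟩ := ih (n - 2) (by omega) ((U.erase p).erase q) hc'
        (fun a ha b hb hne =>
          hadj a (Finset.mem_of_mem_erase (Finset.mem_of_mem_erase ha))
            b (Finset.mem_of_mem_erase (Finset.mem_of_mem_erase hb)) hne)
        ⟨m - 1, by omega⟩
      refine ⟨M' ⊔ G.subgraphOfAdj hadjpq, ?_, ?_⟩
      · rw [Subgraph.verts_sup, hM'v, subgraphOfAdj_verts]
        ext x
        simp only [Set.mem_union, Finset.coe_erase, Set.mem_diff, Set.mem_singleton_iff,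
          Set.mem_insert_iff, Finset.mem_coe]
        constructor
        · rintro (⟨⟨hx, _⟩, _⟩ | (rfl | rfl)) <;> [exact hx; exact hp; exact hqU]
        · intro hx
          by_cases hxp : x = p
          · exact Or.inr (Or.inl hxp)
          · by_cases hxq : x = q
            · exact Or.inr (Or.inr hxq)
            · exact Or.inl ⟨⟨hx, hxp⟩, hxq⟩
      · refine hM'm.sup (Subgraph.IsMatching.subgraphOfAdj hadjpq) ?_
        rw [hM'm.support_eq_verts, (Subgraph.IsMatching.subgraphOfAdj hadjpq).support_eq_verts,
          hM'v, subgraphOfAdj_verts]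
        rw [Set.disjoint_left]
        intro v hv hv2
        rcases hv2 with rfl | rfl
        · exact Finset.notMem_erase _ _ (Finset.mem_of_mem_erase (by exact_mod_cast hv))
        · exact Finset.notMem_erase _ _ (by exact_mod_cast hv)

lemma components_disjoint {H : SimpleGraph V} {B : Set V} (hB : IsBlock H B)
    (hcomp : B.Pairwise H.Adj) {a b w : V} (ha : a ∈ B) (hb : b ∈ B) (hab : a ≠ b)
    (hwa : w ∈ componentOf H (Bᶜ ∪ {a}) a) (hwb : w ∈ componentOf H (Bᶜ ∪ {b}) b) : False := by
  classical
  obtain ⟨ha', hwa', ra⟩ := hwa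
  obtain ⟨hb', hwb', rb⟩ := hwb
  obtain ⟨p1, hp1⟩ := walk_of_reach ha' hwa' ra
  obtain ⟨p2, hp2⟩ := walk_of_reach hb' hwb' rb
  have hc0 : ∀ (Q : H.Walk a b), (∀ z ∈ Q.support, z ∈ Bᶜ ∪ {a, b}) → s(a, b) ∉ Q.edges →
      ∃ c, c ∉ B ∧ c ∈ Q.support := by
    intro Q
    cases Q with
    | nil => intro _ _; exact absurd rfl hab
    | @cons _ c _ hadj q =>
      intro hs he
      refine ⟨c, ?_, by simp⟩
      intro hcB
      have hcs : c ∈ (Walk.cons hadj q).support := by simp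
      rcases hs c hcs with h | h
      · exact h hcB
      · rcases h with rfl | rfl
        · exact H.irrefl hadj
        · exact he (by simp)
  have hsupp : ∀ z ∈ (p1.append p2.reverse).support, z ∈ Bᶜ ∪ {a, b} := by
    intro z hz
    rw [Walk.mem_support_append_iff] at hz
    rcases hz with hz | hz
    · rcases hp1 z hz with h | h
      · exact Or.inl h
      · exact Or.inr (Or.inl h)
    · rw [Walk.support_reverse, List.mem_reverse] at hz
      rcases hp2 z hz with h | h
      · exact Or.inl h
      · exact Or.inr (Or.inr h)
  have hedge : s(a, b) ∉ (p1.append p2.reverse).edges := by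
    intro he
    rw [Walk.edges_append, List.mem_append] at he
    rcases he with he | he
    · have hbm := p1.snd_mem_support_of_mem_edges he
      rcases hp1 b hbm with h | h
      · exact h hb
      · exact hab (Set.mem_singleton_iff.mp h).symm
    · rw [Walk.edges_reverse, List.mem_reverse] at he
      have ham := p2.fst_mem_support_of_mem_edges he
      rcases hp2 a ham with h | h
      · exact h ha
      · exact hab (Set.mem_singleton_iff.mp h)
  set P : H.Walk a b := (p1.append p2.reverse).bypass with hPdef
  have hPpath : P.IsPath := Walk.bypass_isPath _
  have hPsupp : ∀ z ∈ P.support, z ∈ Bᶜ ∪ {a, b} :=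
    fun z hz => hsupp z (Walk.support_bypass_subset _ hz)
  have hPedge : s(a, b) ∉ P.edges := fun he => hedge (Walk.edges_bypass_subset _ he)
  obtain ⟨c, hcB, hcP⟩ := hc0 P hPsupp hPedge
  set B' : Set V := B ∪ {z | z ∈ P.support} with hB'def
  have hsubB' : B ⊆ B' := Set.subset_union_left
  have haB' : a ∈ B' := Or.inl ha
  have hreach : ∀ (x : V) (y : V), y ∈ B' → y ≠ x →
      ∃ c', ∃ (hcB' : c' ∈ B) (_ : c' ≠ x) (hy' : y ∈ B' \ {x}) (hc' : c' ∈ B' \ {x}),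
        (H.induce (B' \ {x})).Reachable ⟨y, hy'⟩ ⟨c', hc'⟩ := by
    intro x y hyB' hyx
    have hself : ∀ (hyB : y ∈ B), ∃ c', ∃ (hcB' : c' ∈ B) (_ : c' ≠ x) (hy' : y ∈ B' \ {x})
        (hc' : c' ∈ B' \ {x}), (H.induce (B' \ {x})).Reachable ⟨y, hy'⟩ ⟨c', hc'⟩ := by
      intro hyB
      have hy' : y ∈ B' \ {x} := ⟨Or.inl hyB, fun h => hyx (Set.mem_singleton_iff.mp h)⟩
      exact ⟨y, hyB, hyx, hy', hy', Reachable.refl _⟩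
    by_cases hyB : y ∈ B
    · exact hself hyB
    · have hyP : y ∈ P.support := by
        rcases hyB' with h | h
        · exact absurd h hyB
        · exact h
      have hsplit : (P.takeUntil y hyP).append (P.dropUntil y hyP) = P := P.take_spec hyP
      have hnodup : ((P.takeUntil y hyP).support ++ (P.dropUntil y hyP).support.tail).Nodup := by
        rw [← Walk.support_append, hsplit]; exact hPpath.support_nodup
      have hdisj := List.disjoint_of_nodup_append hnodup
      by_cases hxt : x ∈ (P.takeUntil y hyP).support
      · have hxd : x ∉ (P.dropUntil y hyP).support := by
          intro hxd
          rw [(P.dropUntil y hyP).support_eq_cons] at hxd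
          rcases List.mem_cons.mp hxd with h | h
          · exact hyx h.symm
          · exact hdisj hxt h
        have hbx : b ≠ x := fun h => hxd (h ▸ (P.dropUntil y hyP).end_mem_support)
        have hsub : ∀ v ∈ (P.dropUntil y hyP).support, v ∈ B' \ {x} := by
          intro v hv
          exact ⟨Or.inr (P.support_dropUntil_subset hyP hv),
            fun h => hxd ((Set.mem_singleton_iff.mp h) ▸ hv)⟩
        exact ⟨b, hb, hbx, hsub y (P.dropUntil y hyP).start_mem_support,
          hsub b (P.dropUntil y hyP).end_mem_support,
          reach_of_walk _ hsub _ _⟩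
      · have hax : a ≠ x := fun h => hxt (h ▸ (P.takeUntil y hyP).start_mem_support)
        have hsub : ∀ v ∈ (P.takeUntil y hyP).support, v ∈ B' \ {x} := by
          intro v hv
          exact ⟨Or.inr (P.support_takeUntil_subset hyP hv),
            fun h => hxt ((Set.mem_singleton_iff.mp h) ▸ hv)⟩
        have hsub' : ∀ v ∈ (P.takeUntil y hyP).reverse.support, v ∈ B' \ {x} := by
          intro v hv
          rw [Walk.support_reverse, List.mem_reverse] at hv
          exact hsub v hv
        have hyD : y ∈ B' \ {x} := hsub y (P.takeUntil y hyP).end_mem_support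
        have haD : a ∈ B' \ {x} := hsub a (P.takeUntil y hyP).start_mem_support
        exact ⟨a, ha, hax, hyD, haD,
          reach_of_walk ((P.takeUntil y hyP).reverse) hsub' hyD haD⟩
  have hconn : (H.induce B').Connected := by
    rw [connected_iff]
    refine ⟨?_, ⟨⟨a, haB'⟩⟩⟩
    intro ⟨y, hy⟩ ⟨z, hz⟩
    have hr : ∀ (v : V) (hv : v ∈ B'), (H.induce B').Reachable ⟨v, hv⟩ ⟨a, haB'⟩ := by
      intro v hv
      rcases hv with hvB | hvP
      · rcases eq_or_ne v a with rfl | hne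
        · exact Reachable.refl _
        · refine reach_of_walk (Walk.cons (hcomp hvB ha hne) Walk.nil) ?_ _ _
          intro z hz
          simp only [Walk.support_cons, Walk.support_nil, List.mem_cons,
            List.mem_singleton] at hz
          rcases hz with rfl | rfl | h
          · exact Or.inl hvB
          · exact haB'
          · exact absurd h List.not_mem_nil
      · refine reach_of_walk (P.takeUntil v hvP).reverse ?_ _ _
        intro z hz
        rw [Walk.support_reverse, List.mem_reverse] at hz
        exact Or.inr (P.support_takeUntil_subset hvP hz)
    exact (hr y hy).trans (hr z hz).symm
  have hnocut : HasNoCutVertex (H.induce B') := by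
    intro x hcut
    apply hcut
    have hpre : (H.induce (B' \ {(x : V)})).Preconnected := by
      intro ⟨y, hy⟩ ⟨z, hz⟩
      have hyx : y ≠ (x : V) := fun h => hy.2 (Set.mem_singleton_iff.mpr h)
      have hzx : z ≠ (x : V) := fun h => hz.2 (Set.mem_singleton_iff.mpr h)
      obtain ⟨cy, hcyB, hcyx, hy', hcy', ry⟩ := hreach (x : V) y hy.1 hyx
      obtain ⟨cz, hczB, hczx, hz', hcz', rz⟩ := hreach (x : V) z hz.1 hzx
      have rcc : (H.induce (B' \ {(x : V)})).Reachable ⟨cy, hcy'⟩ ⟨cz, hcz'⟩ := by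
        rcases eq_or_ne cy cz with rfl | hne
        · exact Reachable.refl _
        · refine reach_of_walk (Walk.cons (hcomp hcyB hczB hne) Walk.nil) ?_ _ _
          intro v hv
          simp only [Walk.support_cons, Walk.support_nil, List.mem_cons,
            List.mem_singleton] at hv
          rcases hv with rfl | rfl | h
          · exact hcy'
          · exact hcz'
          · exact absurd h List.not_mem_nil
      exact (ry.trans rcc).trans rz.symm
    refine Preconnected.map ?_ ?_ hpre
    · exact ⟨fun z => ⟨⟨z.1, z.2.1⟩, fun h => z.2.2 (Set.mem_singleton_iff.mpr
        (congrArg Subtype.val h))⟩, fun {p q} h => h⟩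
    · rintro ⟨⟨z, hz⟩, hne⟩
      exact ⟨⟨z, hz, fun h => hne (Subtype.ext (Set.mem_singleton_iff.mp h))⟩, rfl⟩
  have hBeq : B' = B := hB.2.2 B' hsubB' hconn hnocut
  exact hcB (hBeq ▸ (Or.inr hcP : c ∈ B'))

theorem stmt_14 {V : Type*} [Fintype V] (H : SimpleGraph V) (hH : H.Connected)
    (hbg : IsBlockGraph H) (B : Set V) (hB : IsBlock H B)
    (k : ℕ) (hk : 0 < k) (u : Fin k → V) (huinj : Function.Injective u)
    (hurange : Set.range u = B)
    (G' : Fin k → Set V) (hG' : ∀ i : Fin k, G' i = componentOf H (Bᶜ ∪ {u i}) (u i))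
    (S : Fin k → Set V) (hSsub : ∀ i : Fin k, S i ⊆ G' i)
    (hS₁dom : DominatingOn H (G' ⟨0, hk⟩) (S ⟨0, hk⟩))
    (hS₁u : u ⟨0, hk⟩ ∈ S ⟨0, hk⟩)
    (hSidom : ∀ i : Fin k, i ≠ ⟨0, hk⟩ →
      ∀ v ∈ G' i, v ∉ S i → v ≠ u i → ∃ w ∈ S i, H.Adj v w)
    (J : Finset (Fin k)) (hJ₁ : ⟨0, hk⟩ ∉ J)
    (hJ : ∀ i ∈ J, u i ∈ S i ∧ HasPerfectMatchingOn H (S i \ {u i}))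
    (hnJ : ∀ i : Fin k, i ≠ ⟨0, hk⟩ → i ∉ J → HasPerfectMatchingOn H (S i))
    (hab : (HasPerfectMatchingOn H (S ⟨0, hk⟩ \ {u ⟨0, hk⟩}) ∧ Odd J.card) ∨
      (HasPerfectMatchingOn H (S ⟨0, hk⟩) ∧ Even J.card)) :
    PairedDominating H (⋃ i : Fin k, S i) ∧ u ⟨0, hk⟩ ∈ ⋃ i : Fin k, S i := by
  classical
  set i0 : Fin k := ⟨0, hk⟩ with hi0
  have hcomp : B.Pairwise H.Adj := hbg B hB
  have huB : ∀ i, u i ∈ B := fun i => hurange ▸ Set.mem_range_self i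
  have hGsub : ∀ i, G' i ⊆ Bᶜ ∪ {u i} := by
    intro i v hv
    rw [hG'] at hv
    obtain ⟨_, hv', _⟩ := hv
    exact hv'
  have humem : u i0 ∈ ⋃ i, S i := Set.mem_iUnion.mpr ⟨i0, hS₁u⟩
  have hcover : ∀ v, v ∉ B → ∃ i, v ∈ G' i := by
    intro v hv
    obtain ⟨p⟩ := hH.preconnected v (u i0)
    have key : ∀ {x y : V} (p : H.Walk x y), y ∈ B → x ∉ B →
        ∃ b ∈ B, ∃ q : H.Walk b x, ∀ z ∈ q.support, z ∈ Bᶜ ∪ {b} := by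
      intro x y p
      induction p with
      | nil => intro hy hx; exact absurd hy hx
      | @cons x x' y hadj p ih =>
        intro hy hx
        by_cases hx' : x' ∈ B
        · refine ⟨x', hx', Walk.cons hadj.symm Walk.nil, ?_⟩
          intro z hz
          simp only [Walk.support_cons, Walk.support_nil, List.mem_cons,
            List.mem_singleton] at hz
          rcases hz with rfl | rfl | h
          · exact Or.inr rfl
          · exact Or.inl hx
          · exact absurd h List.not_mem_nil
        · obtain ⟨b, hbB, q, hq⟩ := ih hy hx'
          refine ⟨b, hbB, q.concat hadj.symm, ?_⟩
          intro z hz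
          rw [Walk.support_concat, List.mem_append] at hz
          rcases hz with hz | hz
          · exact hq z hz
          · rcases List.mem_singleton.mp hz with rfl
            exact Or.inl hx
    obtain ⟨b, hbB, q, hq⟩ := key p (huB i0) hv
    have hbr : b ∈ Set.range u := hurange.symm ▸ hbB
    obtain ⟨i, rfl⟩ := hbr
    refine ⟨i, ?_⟩
    rw [hG' i]
    exact ⟨Or.inr rfl, Or.inl hv, reach_of_walk q hq (Or.inr rfl) (Or.inl hv)⟩
  have hdom : Dominating H (⋃ i, S i) := by
    intro v hv
    have hvS : ∀ i, v ∉ S i := fun i hi => hv (Set.mem_iUnion.mpr ⟨i, hi⟩)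
    by_cases hvB : v ∈ B
    · have hvr : v ∈ Set.range u := hurange.symm ▸ hvB
      obtain ⟨i, rfl⟩ := hvr
      have hne : u i ≠ u i0 := fun h => hvS i0 (h ▸ hS₁u)
      exact ⟨u i0, humem, hcomp hvB (huB i0) hne⟩
    · obtain ⟨i, hvi⟩ := hcover v hvB
      by_cases hii : i = i0
      · subst hii
        obtain ⟨w, hw, hadj⟩ := hS₁dom v hvi (hvS i0)
        exact ⟨w, Set.mem_iUnion.mpr ⟨i0, hw⟩, hadj⟩
      · obtain ⟨w, hw, hadj⟩ := hSidom i hii v hvi (hvS i) (fun h => hvB (h ▸ huB i))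
        exact ⟨w, Set.mem_iUnion.mpr ⟨i, hw⟩, hadj⟩
  have hdisjG : ∀ i j : Fin k, i ≠ j → ∀ v, v ∈ G' i → v ∈ G' j → False := by
    intro i j hij v hvi hvj
    have h1 := hGsub i hvi
    have h2 := hGsub j hvj
    rcases h1 with h1 | h1
    · rcases h2 with h2 | h2
      · exact components_disjoint hB hcomp (huB i) (huB j)
          (fun h => hij (huinj h)) (hG' i ▸ hvi) (hG' j ▸ hvj)
      · exact h1 ((Set.mem_singleton_iff.mp h2) ▸ huB j)
    · rcases h2 with h2 | h2
      · exact h2 ((Set.mem_singleton_iff.mp h1) ▸ huB i)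
      · exact hij (huinj ((Set.mem_singleton_iff.mp h1).symm.trans
          (Set.mem_singleton_iff.mp h2)))
  have hassemble : ∀ (T : Fin k → Set V) (Uf : Finset V),
      (∀ i, ∃ M : H.Subgraph, M.verts = T i ∧ M.IsMatching) →
      (∃ MU : H.Subgraph, MU.verts = ↑Uf ∧ MU.IsMatching) →
      (∀ i, T i ⊆ S i) →
      (∀ i, Disjoint (T i) (↑Uf : Set V)) →
      ((⋃ i, T i) ∪ ↑Uf = ⋃ i, S i) →
      HasPerfectMatchingOn H (⋃ i, S i) := by
    intro T Uf hTM hUM hTS hTU huniv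
    choose M hMv hMm using hTM
    obtain ⟨MU, hMUv, hMUm⟩ := hUM
    refine ⟨⨆ o : Option (Fin k), Option.elim o MU M, ?_, ?_⟩
    · rw [Subgraph.verts_iSup, Set.iUnion_option]
      show MU.verts ∪ ⋃ i, (M i).verts = ⋃ i, S i
      rw [hMUv, Set.union_comm, ← huniv]
      congr 1
      exact Set.iUnion_congr hMv
    · apply Subgraph.IsMatching.iSup
      · intro o
        cases o with
        | none => exact hMUm
        | some i => exact hMm i
      · intro o o' hoo'
        have hdv : ∀ (i : Fin k), Disjoint (M i).verts MU.verts := by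
          intro i; rw [hMv, hMUv]; exact hTU i
        cases o with
        | none =>
          cases o' with
          | none => exact absurd rfl hoo'
          | some j =>
            show Disjoint MU.support (M j).support
            rw [hMUm.support_eq_verts, (hMm j).support_eq_verts]
            exact (hdv j).symm
        | some i =>
          cases o' with
          | none =>
            show Disjoint (M i).support MU.support
            rw [hMUm.support_eq_verts, (hMm i).support_eq_verts]
            exact hdv i
          | some j =>
            have hij : i ≠ j := fun h => hoo' (h ▸ rfl)
            show Disjoint (M i).support (M j).support
            rw [(hMm i).support_eq_verts, (hMm j).support_eq_verts, hMv, hMv]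
            rw [Set.disjoint_left]
            intro v hv1 hv2
            exact hdisjG i j hij v (hSsub i (hTS i hv1)) (hSsub j (hTS j hv2))
  rcases hab with ⟨hM0, hodd⟩ | ⟨hM0, heven⟩
  · -- case (a)
    refine ⟨⟨hdom, ?_⟩, humem⟩
    set Uf : Finset V := insert (u i0) (J.image u) with hUf
    have hUB : ∀ x ∈ Uf, x ∈ B := by
      intro x hx
      rw [hUf, Finset.mem_insert] at hx
      rcases hx with rfl | hx
      · exact huB i0
      · obtain ⟨j, _, rfl⟩ := Finset.mem_image.mp hx
        exact huB j
    apply hassemble (fun i => if i ∈ J ∨ i = i0 then S i \ {u i} else S i) Uf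
    · intro i
      by_cases hiJ : i ∈ J
      · rw [if_pos (Or.inl hiJ)]
        exact (hJ i hiJ).2
      · by_cases hii : i = i0
        · subst hii
          rw [if_pos (Or.inr rfl)]
          exact hM0
        · rw [if_neg (by tauto)]
          exact hnJ i hii hiJ
    · have hcard : Uf.card = J.card + 1 := by
        rw [hUf, Finset.card_insert_of_notMem, Finset.card_image_of_injective _ huinj]
        intro h
        obtain ⟨j, hjJ, hj⟩ := Finset.mem_image.mp h
        exact hJ₁ ((huinj hj) ▸ hjJ)
      exact cliqueMatching H Uf.card Uf rfl
        (fun p hp q hq hpq => hcomp (hUB p hp) (hUB q hq) hpq)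
        (by rw [hcard]; exact hodd.add_one)
    · intro i
      split_ifs
      · exact Set.diff_subset
      · exact subset_rfl
    · intro i
      rw [Set.disjoint_left]
      intro v hv hvU
      have hvB : v ∈ B := hUB v hvU
      have hmem : ∀ (hvS : v ∈ S i), v = u i := by
        intro hvS
        rcases hGsub i (hSsub i hvS) with h | h
        · exact absurd hvB h
        · exact Set.mem_singleton_iff.mp h
      by_cases hcase : i ∈ J ∨ i = i0
      · rw [if_pos hcase] at hv
        exact hv.2 (Set.mem_singleton_iff.mpr (hmem hv.1))
      · rw [if_neg hcase] at hv
        have hvui := hmem hv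
        rw [hUf, Finset.mem_coe, Finset.mem_insert] at hvU
        rcases hvU with h | h
        · exact hcase (Or.inr (huinj (hvui.symm.trans h)))
        · obtain ⟨j, hjJ, hj⟩ := Finset.mem_image.mp h
          exact hcase (Or.inl ((huinj (hj.trans hvui)) ▸ hjJ))
    · ext v
      simp only [Set.mem_union, Set.mem_iUnion, hUf, Finset.coe_insert, Set.mem_insert_iff,
        Finset.coe_image, Set.mem_image, Finset.mem_coe]
      constructor
      · rintro (⟨i, hv⟩ | (rfl | ⟨j, hjJ, rfl⟩))
        · by_cases hcase : i ∈ J ∨ i = i0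
          · rw [if_pos hcase] at hv; exact ⟨i, hv.1⟩
          · rw [if_neg hcase] at hv; exact ⟨i, hv⟩
        · exact ⟨i0, hS₁u⟩
        · exact ⟨j, (hJ j hjJ).1⟩
      · rintro ⟨i, hv⟩
        by_cases hcase : i ∈ J ∨ i = i0
        · by_cases hvu : v = u i
          · subst hvu
            rcases hcase with h | h
            · exact Or.inr (Or.inr ⟨i, h, rfl⟩)
            · exact Or.inr (Or.inl (by rw [h]))
          · exact Or.inl ⟨i, by rw [if_pos hcase]; exact ⟨hv, hvu⟩⟩
        · exact Or.inl ⟨i, by rw [if_neg hcase]; exact hv⟩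
  · -- case (b)
    refine ⟨⟨hdom, ?_⟩, humem⟩
    set Uf : Finset V := J.image u with hUf
    have hUB : ∀ x ∈ Uf, x ∈ B := by
      intro x hx
      rw [hUf] at hx
      obtain ⟨j, _, rfl⟩ := Finset.mem_image.mp hx
      exact huB j
    apply hassemble (fun i => if i ∈ J then S i \ {u i} else S i) Uf
    · intro i
      by_cases hiJ : i ∈ J
      · rw [if_pos hiJ]
        exact (hJ i hiJ).2
      · rw [if_neg hiJ]
        by_cases hii : i = i0
        · subst hii
          exact hM0
        · exact hnJ i hii hiJ
    · have hcard : Uf.card = J.card := by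
        rw [hUf, Finset.card_image_of_injective _ huinj]
      exact cliqueMatching H Uf.card Uf rfl
        (fun p hp q hq hpq => hcomp (hUB p hp) (hUB q hq) hpq)
        (by rw [hcard]; exact heven)
    · intro i
      split_ifs
      · exact Set.diff_subset
      · exact subset_rfl
    · intro i
      rw [Set.disjoint_left]
      intro v hv hvU
      have hvB : v ∈ B := hUB v hvU
      have hmem : ∀ (hvS : v ∈ S i), v = u i := by
        intro hvS
        rcases hGsub i (hSsub i hvS) with h | h
        · exact absurd hvB h
        · exact Set.mem_singleton_iff.mp h
      by_cases hcase : i ∈ J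
      · rw [if_pos hcase] at hv
        exact hv.2 (Set.mem_singleton_iff.mpr (hmem hv.1))
      · rw [if_neg hcase] at hv
        have hvui := hmem hv
        rw [hUf, Finset.mem_coe] at hvU
        obtain ⟨j, hjJ, hj⟩ := Finset.mem_image.mp hvU
        exact hcase ((huinj (hj.trans hvui)) ▸ hjJ)
    · ext v
      simp only [Set.mem_union, Set.mem_iUnion, hUf, Finset.coe_image, Set.mem_image,
        Finset.mem_coe]
      constructor
      · rintro (⟨i, hv⟩ | ⟨j, hjJ, rfl⟩)
        · by_cases hcase : i ∈ J
          · rw [if_pos hcase] at hv; exact ⟨i, hv.1⟩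
          · rw [if_neg hcase] at hv; exact ⟨i, hv⟩
        · exact ⟨j, (hJ j hjJ).1⟩
      · rintro ⟨i, hv⟩
        by_cases hcase : i ∈ J
        · by_cases hvu : v = u i
          · subst hvu
            exact Or.inr ⟨i, hcase, rfl⟩
          · exact Or.inl ⟨i, by rw [if_pos hcase]; exact ⟨hv, hvu⟩⟩
        · exact Or.inl ⟨i, by rw [if_neg hcase]; exact hv⟩
end
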